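/- arXiv:2301.12426 — 3 statements merged into one kernel-verified Lean document; each statement's English description precedes it below -/
import Mathlib

section
/- Fix positive integers n, k and m ≥ 1, and let u_n, X_n be as defined. Then with v_n = u_n^{m+1}: (P0) u_n(X_n) ≠ v_n(X_n); (P1) for all variables y, z, the two-letter word yz occurs as a factor of u_n(X_n) at most once; (P2) for every variable z, between any two occurrences of z in u_n(X_n) there occur at least n pairwise distinct variables. -/
/-! ### Combinatorics of words, viewed as lists of variables -/

/-- The list of letters of a word of the free semigroup. -/
def wToList (w : FreeSemigroup ℕ) : List ℕ := w.head :: w.tail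

/-- The word of the free semigroup whose list of letters is the given (nonempty) list
(a junk value is returned on the empty list). -/
def wOfList : List ℕ → FreeSemigroup ℕ
  | [] => FreeSemigroup.of 0
  | a :: l => ⟨a, l⟩

/-- `restrict w X` is the word `w(X)` (possibly empty) obtained from `w` by deleting all
occurrences of variables not belonging to `X`. -/
noncomputable def restrict (w : List ℕ) (X : Set ℕ) : List ℕ :=
  w.filter fun a => @decide (a ∈ X) (Classical.propDecidable _)

/-- The word `u` occurs as a factor of `w` at most once: there is at most one decomposition
`w = v' ++ u ++ v''`. -/
def FactorAtMostOnce (u w : List ℕ) : Prop :=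
  ∀ p₁ s₁ p₂ s₂ : List ℕ, p₁ ++ u ++ s₁ = w → p₂ ++ u ++ s₂ = w → p₁ = p₂ ∧ s₁ = s₂

/-- Between any two occurrences (at positions `i < j`) of any variable `z` in `w` there occur
at least `n` pairwise distinct variables. -/
def DistinctBetween (n : ℕ) (w : List ℕ) : Prop :=
  ∀ (z i j : ℕ), i < j → w[i]? = some z → w[j]? = some z →
    n ≤ ((w.take j).drop (i + 1)).toFinset.card

/-- A word is sparse if between any two occurrences of a repeated variable there is an
occurrence of some linear variable (i.e. a variable occurring exactly once in the word). -/
def Sparse (w : List ℕ) : Prop :=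
  ∀ (z i j : ℕ), i < j → w[i]? = some z → w[j]? = some z →
    ∃ y, w.count y = 1 ∧ y ∈ (w.take j).drop (i + 1)

/-- The `j`-th power of a word, as a list. -/
def powerList (j : ℕ) (l : List ℕ) : List ℕ := (List.replicate j l).flatten

/-! ### The words `u_n` of the main construction -/

/-- The variable `x`. -/
def varx : ℕ := 0
/-- The variable `x_i` (the variables `x, x_i, y_i, z_i` are pairwise distinct). -/
def varX (i : ℕ) : ℕ := 3 * i + 1
/-- The variable `y_i`. -/
def varY (i : ℕ) : ℕ := 3 * i + 2
/-- The variable `z_i`. -/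
def varZ (i : ℕ) : ℕ := 3 * i + 3

/-- `a_n[τ] = x^k x_{0τ} x^k y_1 x^k x_{1τ} x^k y_2 x^k x_{2τ} x^k ⋯ x^k y_n x^k x_{nτ} x^k`. -/
def aWord (n k : ℕ) (τ : ℕ → ℕ) : List ℕ :=
  List.replicate k varx ++ [varX (τ 0)] ++
    (List.range n).flatMap (fun i =>
      List.replicate k varx ++ [varY (i + 1)] ++ List.replicate k varx ++ [varX (τ (i + 1))]) ++
    List.replicate k varx

/-- `b_n[τ] = x^k z_{0τ} x^k y_1 x^k z_{1τ} x^k y_2 x^k z_{2τ} x^k ⋯ x^k y_n x^k z_{nτ} x^k`. -/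
def bWord (n k : ℕ) (τ : ℕ → ℕ) : List ℕ :=
  List.replicate k varx ++ [varZ (τ 0)] ++
    (List.range n).flatMap (fun i =>
      List.replicate k varx ++ [varY (i + 1)] ++ List.replicate k varx ++ [varZ (τ (i + 1))]) ++
    List.replicate k varx

/-- `u_n = ∏_{i=0}^{n} a_n[π^i] b_n[π^i]`, where `π` is the cyclic permutation `(0 1 ⋯ n)` of
`{0, 1, …, n}`, so that `π^i` sends `j` to `(j + i) mod (n + 1)`. -/
def uWord (n k : ℕ) : List ℕ :=
  (List.range (n + 1)).flatMap fun i =>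
    aWord n k (fun j => (j + i) % (n + 1)) ++ bWord n k (fun j => (j + i) % (n + 1))

/-- `X_n = {x_0, y_0, z_0, x_1, y_1, z_1, …, x_n, y_n, z_n}`. -/
def Xset (n : ℕ) : Set ℕ := {v | ∃ i ≤ n, v = varX i ∨ v = varY i ∨ v = varZ i}



/-! auxiliary -/

def letterF (n q r : ℕ) : ℕ :=
  if r % 2 = 1 then varY (r / 2 + 1)
  else if q % 2 = 0 then varX ((r / 2 + q / 2) % (n + 1)) else varZ ((r / 2 + q / 2) % (n + 1))

def fIdx (n p : ℕ) : ℕ := letterF n (p / (2 * n + 1)) (p % (2 * n + 1))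

lemma varx_notMem (n : ℕ) : varx ∉ Xset n := by
  rintro ⟨i, _, h | h | h⟩ <;> simp [varx, varX, varY, varZ] at h <;> omega

lemma varX_mem {n i : ℕ} (h : i ≤ n) : varX i ∈ Xset n := ⟨i, h, Or.inl rfl⟩
lemma varY_mem {n i : ℕ} (h : i ≤ n) : varY i ∈ Xset n := ⟨i, h, Or.inr (Or.inl rfl)⟩
lemma varZ_mem {n i : ℕ} (h : i ≤ n) : varZ i ∈ Xset n := ⟨i, h, Or.inr (Or.inr rfl)⟩

lemma restrict_append (a b : List ℕ) (X : Set ℕ) :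
    restrict (a ++ b) X = restrict a X ++ restrict b X := List.filter_append _ _

lemma restrict_flatMap {α : Type} (l : List α) (g : α → List ℕ) (X : Set ℕ) :
    restrict (l.flatMap g) X = l.flatMap (fun x => restrict (g x) X) := by
  induction l with
  | nil => rfl
  | cons a l ih => simp only [List.flatMap_cons, restrict_append, ih]

lemma restrict_replicate_varx (n k : ℕ) : restrict (List.replicate k varx) (Xset n) = [] := by
  apply List.filter_eq_nil_iff.2
  intro a ha
  rw [List.eq_of_mem_replicate ha]
  simpa using varx_notMem n

lemma restrict_single_mem {n a : ℕ} (h : a ∈ Xset n) : restrict [a] (Xset n) = [a] := by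
  simp [restrict, h]

lemma restrict_aWord (n k : ℕ) (τ : ℕ → ℕ) (hτ : ∀ j, τ j ≤ n) :
    restrict (aWord n k τ) (Xset n) =
      varX (τ 0) :: (List.range n).flatMap (fun i => [varY (i + 1), varX (τ (i + 1))]) := by
  simp only [aWord, restrict_append, restrict_flatMap, restrict_replicate_varx,
    restrict_single_mem (varX_mem (hτ 0))]
  have : ((List.range n).flatMap fun i =>
      [] ++ restrict [varY (i + 1)] (Xset n) ++ [] ++ restrict [varX (τ (i + 1))] (Xset n))
      = (List.range n).flatMap fun i => [varY (i + 1), varX (τ (i + 1))] := by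
    refine List.flatMap_congr fun i hi => ?_
    simp only [List.mem_range] at hi
    simp only [restrict_single_mem (varX_mem (hτ (i+1))),
      restrict_single_mem (varY_mem (show i+1 ≤ n by omega))]
    rfl
  rw [this]
  simp

lemma restrict_bWord (n k : ℕ) (τ : ℕ → ℕ) (hτ : ∀ j, τ j ≤ n) :
    restrict (bWord n k τ) (Xset n) =
      varZ (τ 0) :: (List.range n).flatMap (fun i => [varY (i + 1), varZ (τ (i + 1))]) := by
  simp only [bWord, restrict_append, restrict_flatMap, restrict_replicate_varx,
    restrict_single_mem (varZ_mem (hτ 0))]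
  have : ((List.range n).flatMap fun i =>
      [] ++ restrict [varY (i + 1)] (Xset n) ++ [] ++ restrict [varZ (τ (i + 1))] (Xset n))
      = (List.range n).flatMap fun i => [varY (i + 1), varZ (τ (i + 1))] := by
    refine List.flatMap_congr fun i hi => ?_
    simp only [List.mem_range] at hi
    simp only [restrict_single_mem (varZ_mem (hτ (i+1))),
      restrict_single_mem (varY_mem (show i+1 ≤ n by omega))]
    rfl
  rw [this]
  simp

lemma block_eq_map (g h : ℕ → ℕ) (m : ℕ) :
    g 0 :: (List.range m).flatMap (fun i => [h (i + 1), g (i + 1)]) =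
      (List.range (2 * m + 1)).map (fun r => if r % 2 = 1 then h (r / 2 + 1) else g (r / 2)) := by
  induction m with
  | zero => simp [List.range_succ]
  | succ m ih =>
    rw [List.range_succ, List.flatMap_append,
      show 2 * (m + 1) + 1 = (2 * m + 1) + 1 + 1 by omega, List.range_succ, List.range_succ,
      List.map_append, List.map_append, ← ih]
    have h1 : (2 * m + 1) % 2 = 1 := by omega
    have h2 : (2 * m + 1) / 2 = m := by omega
    have h3 : (2 * m + 1 + 1) % 2 = 0 := by omega
    have h4 : (2 * m + 1 + 1) / 2 = m + 1 := by omega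
    simp [h1, h2, h3, h4]

lemma flatMap_pair (M : ℕ) (P Q : ℕ → List ℕ) :
    (List.range M).flatMap (fun i => P i ++ Q i) =
      (List.range (2 * M)).flatMap (fun q => if q % 2 = 0 then P (q / 2) else Q (q / 2)) := by
  induction M with
  | zero => simp
  | succ M ih =>
    rw [List.range_succ, List.flatMap_append,
      show 2 * (M + 1) = (2 * M) + 1 + 1 by omega, List.range_succ, List.range_succ,
      List.flatMap_append, List.flatMap_append, ← ih]
    have h1 : (2 * M) % 2 = 0 := by omega
    have h2 : (2 * M) / 2 = M := by omega
    have h3 : (2 * M + 1) % 2 = 1 := by omega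
    have h4 : (2 * M + 1) / 2 = M := by omega
    simp [h1, h2, h3, h4]

lemma flatMap_map_range (M c : ℕ) (G : ℕ → ℕ → ℕ) :
    (List.range M).flatMap (fun q => (List.range c).map (G q)) =
      (List.range (M * c)).map (fun p => G (p / c) (p % c)) := by
  induction M with
  | zero => simp
  | succ M ih =>
    rw [List.range_succ, List.flatMap_append, ih, show (M + 1) * c = M * c + c by ring,
      List.range_add, List.map_append, List.map_map]
    congr 1
    · simp only [List.flatMap_cons, List.flatMap_nil, List.append_nil]
      refine List.map_congr_left fun x hx => ?_
      simp only [List.mem_range] at hx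
      have hc : 0 < c := by omega
      have h1 : (M * c + x) / c = M := by
        rw [Nat.add_comm, Nat.add_mul_div_right _ _ hc, Nat.div_eq_of_lt hx]; omega
      have h2 : (M * c + x) % c = x := by
        rw [Nat.add_comm, Nat.add_mul_mod_self_right, Nat.mod_eq_of_lt hx]
      simp [Function.comp, h1, h2]

lemma restrict_uWord (n k : ℕ) :
    restrict (uWord n k) (Xset n) =
      (List.range (2 * (n + 1) * (2 * n + 1))).map (fIdx n) := by
  have hτ : ∀ i j : ℕ, (j + i) % (n + 1) ≤ n := fun i j => by
    have := Nat.mod_lt (j + i) (show 0 < n + 1 by omega); omega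
  unfold uWord
  rw [restrict_flatMap]
  have hblock : ∀ i ∈ List.range (n + 1),
      restrict (aWord n k (fun j => (j + i) % (n + 1)) ++ bWord n k (fun j => (j + i) % (n + 1)))
        (Xset n) =
      ((List.range (2 * n + 1)).map (letterF n (2 * i)) ++
        (List.range (2 * n + 1)).map (letterF n (2 * i + 1))) := by
    intro i _
    rw [restrict_append, restrict_aWord n k _ (hτ i), restrict_bWord n k _ (hτ i),
      block_eq_map (fun j => varX ((j + i) % (n + 1))) varY n,
      block_eq_map (fun j => varZ ((j + i) % (n + 1))) varY n]
    congr 1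
    · refine List.map_congr_left fun r _ => ?_
      have e1 : (2 * i) % 2 = 0 := by omega
      have e2 : (2 * i) / 2 = i := by omega
      simp [letterF, e1, e2]
    · refine List.map_congr_left fun r _ => ?_
      have e1 : (2 * i + 1) % 2 = 1 := by omega
      have e2 : (2 * i + 1) / 2 = i := by omega
      simp [letterF, e1, e2]
  rw [List.flatMap_congr hblock, flatMap_pair (n + 1)
    (fun i => (List.range (2 * n + 1)).map (letterF n (2 * i)))
    (fun i => (List.range (2 * n + 1)).map (letterF n (2 * i + 1)))]
  have hq : ∀ q ∈ List.range (2 * (n + 1)),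
      (if q % 2 = 0 then (List.range (2 * n + 1)).map (letterF n (2 * (q / 2)))
        else (List.range (2 * n + 1)).map (letterF n (2 * (q / 2) + 1))) =
      (List.range (2 * n + 1)).map (letterF n q) := by
    intro q _
    rcases Nat.even_or_odd q with hq | hq
    · obtain ⟨t, ht⟩ := hq
      have e1 : q % 2 = 0 := by omega
      have e2 : 2 * (q / 2) = q := by omega
      rw [if_pos e1, e2]
    · obtain ⟨t, ht⟩ := hq
      have e1 : ¬ q % 2 = 0 := by omega
      have e2 : 2 * (q / 2) + 1 = q := by omega
      rw [if_neg e1, e2]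
  rw [List.flatMap_congr hq, flatMap_map_range (2 * (n + 1)) (2 * n + 1) (letterF n)]
  rfl

lemma length_restrict_uWord (n k : ℕ) :
    (restrict (uWord n k) (Xset n)).length = 2 * (n + 1) * (2 * n + 1) := by
  rw [restrict_uWord]; simp

lemma myDivAdd (c q r : ℕ) (hr : r < c) : (q * c + r) / c = q := by
  rw [Nat.add_comm, Nat.add_mul_div_right _ _ (show 0 < c by omega), Nat.div_eq_of_lt hr]; omega

lemma myModAdd (c q r : ℕ) (hr : r < c) : (q * c + r) % c = r := by
  rw [Nat.add_comm, Nat.add_mul_mod_self_right, Nat.mod_eq_of_lt hr]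

lemma fIdx_eval (n q r : ℕ) (hr : r < 2 * n + 1) :
    fIdx n (q * (2 * n + 1) + r) = letterF n q r := by
  unfold fIdx; rw [myDivAdd _ _ _ hr, myModAdd _ _ _ hr]

lemma mod_recover (N i j : ℕ) (hi : i < N) (hj : j ≤ N) :
    ((j + i) % N + N - j) % N = i := by
  have e : (j + i) % N + N - j = (j + i) % N + (N - j) := by omega
  rw [e, Nat.mod_add_mod, show j + i + (N - j) = i + N by omega, Nat.add_mod_right,
    Nat.mod_eq_of_lt hi]

def decPair (n u v : ℕ) : ℕ :=
  if u % 3 = 1 then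
    if v % 3 = 2 then
      2 * (((u - 1) / 3 + (n + 1) - ((v - 2) / 3 - 1) % (n + 1)) % (n + 1)) * (2 * n + 1)
        + 2 * ((v - 2) / 3 - 1)
    else
      2 * (v / 3 - 1) * (2 * n + 1) + 2 * n
  else if u % 3 = 0 then
    if v % 3 = 2 then
      (2 * ((u / 3 - 1 + (n + 1) - ((v - 2) / 3 - 1) % (n + 1)) % (n + 1)) + 1) * (2 * n + 1)
        + 2 * ((v - 2) / 3 - 1)
    else
      (2 * (((v - 1) / 3 + n) % (n + 1)) + 1) * (2 * n + 1) + 2 * n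
  else
    if v % 3 = 1 then
      2 * (((v - 1) / 3 + (n + 1) - ((u - 2) / 3) % (n + 1)) % (n + 1)) * (2 * n + 1)
        + (2 * ((u - 2) / 3 - 1) + 1)
    else
      (2 * ((v / 3 - 1 + (n + 1) - ((u - 2) / 3) % (n + 1)) % (n + 1)) + 1) * (2 * n + 1)
        + (2 * ((u - 2) / 3 - 1) + 1)

lemma letterF_even (n q j : ℕ) (hq : q % 2 = 0) :
    letterF n q (2 * j) = varX ((j + q / 2) % (n + 1)) := by
  simp [letterF, Nat.mul_mod_right, hq, Nat.mul_div_cancel_left _ (show 0 < 2 by omega)]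

lemma letterF_odd (n q j : ℕ) (hq : q % 2 = 1) :
    letterF n q (2 * j) = varZ ((j + q / 2) % (n + 1)) := by
  simp [letterF, Nat.mul_mod_right, hq, Nat.mul_div_cancel_left _ (show 0 < 2 by omega)]

lemma letterF_y (n q j : ℕ) : letterF n q (2 * j + 1) = varY (j + 1) := by
  have h1 : (2 * j + 1) % 2 = 1 := by omega
  have h2 : (2 * j + 1) / 2 = j := by omega
  simp [letterF, h1, h2]

lemma decPair_XY (n s j : ℕ) :
    decPair n (varX s) (varY (j + 1)) =
      2 * ((s + (n + 1) - j % (n + 1)) % (n + 1)) * (2 * n + 1) + 2 * j := by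
  unfold decPair varX varY
  rw [if_pos (show (3 * s + 1) % 3 = 1 by omega), if_pos (show (3 * (j + 1) + 2) % 3 = 2 by omega),
    show (3 * s + 1 - 1) / 3 = s by omega, show (3 * (j + 1) + 2 - 2) / 3 - 1 = j by omega]

lemma decPair_ZY (n s j : ℕ) :
    decPair n (varZ s) (varY (j + 1)) =
      (2 * ((s + (n + 1) - j % (n + 1)) % (n + 1)) + 1) * (2 * n + 1) + 2 * j := by
  unfold decPair varZ varY
  rw [if_neg (show ¬ (3 * s + 3) % 3 = 1 by omega), if_pos (show (3 * s + 3) % 3 = 0 by omega),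
    if_pos (show (3 * (j + 1) + 2) % 3 = 2 by omega),
    show (3 * s + 3) / 3 - 1 = s by omega, show (3 * (j + 1) + 2 - 2) / 3 - 1 = j by omega]

lemma decPair_YX (n j t : ℕ) :
    decPair n (varY (j + 1)) (varX t) =
      2 * ((t + (n + 1) - (j + 1) % (n + 1)) % (n + 1)) * (2 * n + 1) + (2 * j + 1) := by
  unfold decPair varY varX
  rw [if_neg (show ¬ (3 * (j + 1) + 2) % 3 = 1 by omega),
    if_neg (show ¬ (3 * (j + 1) + 2) % 3 = 0 by omega),
    if_pos (show (3 * t + 1) % 3 = 1 by omega),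
    show (3 * t + 1 - 1) / 3 = t by omega, show (3 * (j + 1) + 2 - 2) / 3 = j + 1 by omega,
    show 2 * (j + 1 - 1) + 1 = 2 * j + 1 by omega]

lemma decPair_YZ (n j t : ℕ) :
    decPair n (varY (j + 1)) (varZ t) =
      (2 * ((t + (n + 1) - (j + 1) % (n + 1)) % (n + 1)) + 1) * (2 * n + 1) + (2 * j + 1) := by
  unfold decPair varY varZ
  rw [if_neg (show ¬ (3 * (j + 1) + 2) % 3 = 1 by omega),
    if_neg (show ¬ (3 * (j + 1) + 2) % 3 = 0 by omega),
    if_neg (show ¬ (3 * t + 3) % 3 = 1 by omega),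
    show (3 * t + 3) / 3 - 1 = t by omega, show (3 * (j + 1) + 2 - 2) / 3 = j + 1 by omega,
    show 2 * (j + 1 - 1) + 1 = 2 * j + 1 by omega]

lemma decPair_XZ (n s i : ℕ) :
    decPair n (varX s) (varZ i) = 2 * i * (2 * n + 1) + 2 * n := by
  unfold decPair varX varZ
  rw [if_pos (show (3 * s + 1) % 3 = 1 by omega), if_neg (show ¬ (3 * i + 3) % 3 = 2 by omega),
    show (3 * i + 3) / 3 - 1 = i by omega]

lemma decPair_ZX (n s t : ℕ) :
    decPair n (varZ s) (varX t) = (2 * ((t + n) % (n + 1)) + 1) * (2 * n + 1) + 2 * n := by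
  unfold decPair varZ varX
  rw [if_neg (show ¬ (3 * s + 3) % 3 = 1 by omega), if_pos (show (3 * s + 3) % 3 = 0 by omega),
    if_neg (show ¬ (3 * t + 1) % 3 = 2 by omega), show (3 * t + 1 - 1) / 3 = t by omega]

lemma fIdx_decode (n a : ℕ) (hn : 0 < n) (ha : a + 1 < 2 * (n + 1) * (2 * n + 1)) :
    decPair n (fIdx n a) (fIdx n (a + 1)) = a := by
  obtain ⟨q, r, hr, rfl⟩ : ∃ q r, r < 2 * n + 1 ∧ q * (2 * n + 1) + r = a :=
    ⟨a / (2 * n + 1), a % (2 * n + 1), Nat.mod_lt _ (by omega), Nat.div_add_mod' a _⟩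
  have hq : q < 2 * (n + 1) := by
    by_contra h
    push_neg at h
    have : 2 * (n + 1) * (2 * n + 1) ≤ q * (2 * n + 1) := Nat.mul_le_mul_right _ h
    omega
  have hu : fIdx n (q * (2 * n + 1) + r) = letterF n q r := fIdx_eval n q r hr
  by_cases hb : r = 2 * n
  · -- boundary case
    subst hb
    have hv : fIdx n (q * (2 * n + 1) + 2 * n + 1) = letterF n (q + 1) 0 := by
      rw [show q * (2 * n + 1) + 2 * n + 1 = (q + 1) * (2 * n + 1) + 0 by ring]
      exact fIdx_eval n (q + 1) 0 (by omega)
    have hq1 : q + 1 < 2 * (n + 1) := by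
      have h1 : (q + 1) * (2 * n + 1) < 2 * (n + 1) * (2 * n + 1) := by
        calc (q + 1) * (2 * n + 1) = q * (2 * n + 1) + 2 * n + 1 := by ring
        _ < 2 * (n + 1) * (2 * n + 1) := ha
      exact Nat.lt_of_mul_lt_mul_right h1
    rcases Nat.even_or_odd q with ⟨i, hi⟩ | ⟨i, hi⟩
    · have hi2 : q = 2 * i := by omega
      have hiN : i < n + 1 := by omega
      have hu2 : letterF n q (2 * n) = varX ((n + i) % (n + 1)) := by
        rw [show (2 : ℕ) * n = 2 * n by rfl, letterF_even n q n (by omega),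
          show q / 2 = i by omega]
      have hv2 : letterF n (q + 1) 0 = varZ i := by
        have h0 := letterF_odd n (q + 1) 0 (by omega)
        rw [show (2 : ℕ) * 0 = 0 by rfl] at h0
        rw [h0, show (q + 1) / 2 = i by omega, Nat.zero_add, Nat.mod_eq_of_lt hiN]
      rw [hu, hv, hu2, hv2, decPair_XZ, hi2]
    · have hiN : i < n + 1 := by omega
      have hu2 : letterF n q (2 * n) = varZ ((n + i) % (n + 1)) := by
        rw [letterF_odd n q n (by omega), show q / 2 = i by omega]
      have hv2 : letterF n (q + 1) 0 = varX ((i + 1) % (n + 1)) := by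
        have h0 := letterF_even n (q + 1) 0 (by omega)
        rw [show (2 : ℕ) * 0 = 0 by rfl] at h0
        rw [h0, show (q + 1) / 2 = i + 1 by omega, Nat.zero_add]
      rw [hu, hv, hu2, hv2, decPair_ZX]
      have he : ((i + 1) % (n + 1) + n) % (n + 1) = i := by
        rw [Nat.mod_add_mod, show i + 1 + n = i + (n + 1) by ring, Nat.add_mod_right,
          Nat.mod_eq_of_lt hiN]
      rw [he, hi]
  · -- within block
    have hrb : r < 2 * n := by omega
    have hv : fIdx n (q * (2 * n + 1) + r + 1) = letterF n q (r + 1) := by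
      rw [show q * (2 * n + 1) + r + 1 = q * (2 * n + 1) + (r + 1) by ring]
      exact fIdx_eval n q (r + 1) (by omega)
    rcases Nat.even_or_odd r with ⟨j, hj⟩ | ⟨j, hj⟩
    · have hj2 : r = 2 * j := by omega
      have hjn : j < n := by omega
      have hv2 : letterF n q (r + 1) = varY (j + 1) := by
        rw [show r + 1 = 2 * j + 1 by omega, letterF_y]
      rcases Nat.even_or_odd q with ⟨i, hi⟩ | ⟨i, hi⟩
      · have hi2 : q = 2 * i := by omega
        have hiN : i < n + 1 := by omega
        have hu2 : letterF n q r = varX ((j + i) % (n + 1)) := by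
          rw [hj2, letterF_even n q j (by omega), show q / 2 = i by omega]
        rw [hu, hv, hu2, hv2, decPair_XY, Nat.mod_eq_of_lt (show j < n + 1 by omega),
          mod_recover (n + 1) i j hiN (by omega), hi2, hj2]
      · have hiN : i < n + 1 := by omega
        have hu2 : letterF n q r = varZ ((j + i) % (n + 1)) := by
          rw [hj2, letterF_odd n q j (by omega), show q / 2 = i by omega]
        rw [hu, hv, hu2, hv2, decPair_ZY, Nat.mod_eq_of_lt (show j < n + 1 by omega),
          mod_recover (n + 1) i j hiN (by omega), hi, hj2]
    · have hjn : j < n := by omega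
      have hu2 : letterF n q r = varY (j + 1) := by rw [hj, letterF_y]
      rcases Nat.even_or_odd q with ⟨i, hi⟩ | ⟨i, hi⟩
      · have hi2 : q = 2 * i := by omega
        have hiN : i < n + 1 := by omega
        have hv2 : letterF n q (r + 1) = varX ((j + 1 + i) % (n + 1)) := by
          rw [show r + 1 = 2 * (j + 1) by omega, letterF_even n q (j + 1) (by omega),
            show q / 2 = i by omega]
        rw [hu, hv, hu2, hv2, decPair_YX, Nat.mod_eq_of_lt (show j + 1 < n + 1 by omega),
          mod_recover (n + 1) i (j + 1) hiN (by omega), hi2, hj]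
      · have hiN : i < n + 1 := by omega
        have hv2 : letterF n q (r + 1) = varZ ((j + 1 + i) % (n + 1)) := by
          rw [show r + 1 = 2 * (j + 1) by omega, letterF_odd n q (j + 1) (by omega),
            show q / 2 = i by omega]
        rw [hu, hv, hu2, hv2, decPair_YZ, Nat.mod_eq_of_lt (show j + 1 < n + 1 by omega),
          mod_recover (n + 1) i (j + 1) hiN (by omega), hi, hj]

lemma mod_inj (N x y : ℕ) (h : x % N = y % N) (h1 : x < y + N) (h2 : y < x + N) : x = y := by
  rcases Nat.eq_zero_or_pos N with hN | hN
  · subst hN; simpa using h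
  rcases le_total x y with hle | hle
  · obtain ⟨t, ht⟩ := (Nat.modEq_iff_dvd' hle).mp h
    have htlt : N * t < N * 1 := by omega
    have ht0 : t = 0 := Nat.lt_one_iff.mp (Nat.lt_of_mul_lt_mul_left htlt)
    subst ht0
    simp only [Nat.mul_zero] at ht
    omega
  · obtain ⟨t, ht⟩ := (Nat.modEq_iff_dvd' hle).mp h.symm
    have htlt : N * t < N * 1 := by omega
    have ht0 : t = 0 := Nat.lt_one_iff.mp (Nat.lt_of_mul_lt_mul_left htlt)
    subst ht0
    simp only [Nat.mul_zero] at ht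
    omega

lemma card_between_ge {w : List ℕ} {i j n : ℕ} (hjw : j ≤ w.length)
    (pos g : ℕ → ℕ) (hp : ∀ s, s < n → i + 1 ≤ pos s ∧ pos s < j)
    (hg : ∀ s, s < n → w[pos s]? = some (g s))
    (hinj : ∀ s, s < n → ∀ t, t < n → g s = g t → s = t) :
    n ≤ ((w.take j).drop (i + 1)).toFinset.card := by
  have hmem : ∀ s ∈ Finset.range n, g s ∈ ((w.take j).drop (i + 1)).toFinset := by
    intro s hs
    rw [Finset.mem_range] at hs
    obtain ⟨h1, h2⟩ := hp s hs
    rw [List.mem_toFinset, List.mem_iff_getElem?]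
    refine ⟨pos s - (i + 1), ?_⟩
    rw [List.getElem?_drop, show i + 1 + (pos s - (i + 1)) = pos s by omega,
      List.getElem?_take, if_pos h2]
    exact hg s hs
  have hi : Set.InjOn g (Finset.range n) := by
    intro s hs t ht h
    simp only [Finset.coe_range, Set.mem_Iio] at hs ht
    exact hinj s hs t ht h
  have := Finset.card_le_card_of_injOn g hmem hi
  simpa using this

lemma w_getElem (n k p : ℕ) (hp : p < 2 * (n + 1) * (2 * n + 1)) :
    (restrict (uWord n k) (Xset n))[p]? = some (fIdx n p) := by
  rw [restrict_uWord, List.getElem?_map, List.getElem?_range hp, Option.map_some]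

lemma w_getElem' (n k p z : ℕ) (h : (restrict (uWord n k) (Xset n))[p]? = some z) :
    p < 2 * (n + 1) * (2 * n + 1) ∧ z = fIdx n p := by
  have hlen := length_restrict_uWord n k
  have hp : p < 2 * (n + 1) * (2 * n + 1) := by
    rcases List.getElem?_eq_some_iff.mp h with ⟨hlt, _⟩
    omega
  refine ⟨hp, ?_⟩
  rw [w_getElem n k p hp] at h
  exact (Option.some_injective _ h).symm

lemma letterF_shape (n q : ℕ) :
    ∃ d, ((d = 1 ∧ q % 2 = 0) ∨ (d = 3 ∧ q % 2 = 1)) ∧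
      ∀ m, letterF n q (2 * m) = 3 * ((m + q / 2) % (n + 1)) + d := by
  rcases Nat.even_or_odd q with ⟨c, hc⟩ | ⟨c, hc⟩
  · exact ⟨1, Or.inl ⟨rfl, by omega⟩, fun m => letterF_even n q m (by omega)⟩
  · exact ⟨3, Or.inr ⟨rfl, by omega⟩, fun m => letterF_odd n q m (by omega)⟩

lemma restrict_powerList (j : ℕ) (l : List ℕ) (X : Set ℕ) :
    restrict (powerList j l) X = powerList j (restrict l X) := by
  induction j with
  | zero => rfl
  | succ j ih =>
    simp only [powerList, List.replicate_succ, List.flatten_cons, restrict_append] at *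
    rw [ih]

lemma P0 (n k m : ℕ) (hn : 0 < n) (hm : 1 ≤ m) :
    restrict (uWord n k) (Xset n) ≠ restrict (powerList (m + 1) (uWord n k)) (Xset n) := by
  intro h
  have hL := length_restrict_uWord n k
  have h2 := congrArg List.length h
  rw [restrict_powerList] at h2
  have h3 : (powerList (m + 1) (restrict (uWord n k) (Xset n))).length =
      (m + 1) * (2 * (n + 1) * (2 * n + 1)) := by
    simp [powerList, hL, Nat.mul_comm]
  rw [hL, h3] at h2
  have hpos : 0 < 2 * (n + 1) * (2 * n + 1) := by positivity
  have : 2 * (2 * (n + 1) * (2 * n + 1)) ≤ (m + 1) * (2 * (n + 1) * (2 * n + 1)) :=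
    Nat.mul_le_mul_right _ (by omega)
  omega

lemma P1 (n k : ℕ) (hn : 0 < n) (y z : ℕ) :
    FactorAtMostOnce [y, z] (restrict (uWord n k) (Xset n)) := by
  have key : ∀ p s : List ℕ, p ++ [y, z] ++ s = restrict (uWord n k) (Xset n) →
      p.length = decPair n y z := by
    intro p s h
    rw [List.append_assoc] at h
    have hy : (restrict (uWord n k) (Xset n))[p.length]? = some y := by
      rw [← h, List.getElem?_append_right (le_refl p.length), Nat.sub_self]
      simp
    have hz : (restrict (uWord n k) (Xset n))[p.length + 1]? = some z := by
      rw [← h, List.getElem?_append_right (show p.length ≤ p.length + 1 by omega),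
        Nat.add_sub_cancel_left]
      simp
    obtain ⟨hpL, hyv⟩ := w_getElem' n k _ _ hy
    obtain ⟨hpL1, hzv⟩ := w_getElem' n k _ _ hz
    rw [hyv, hzv]
    exact (fIdx_decode n p.length hn hpL1).symm
  intro p₁ s₁ p₂ s₂ h1 h2
  have hl : p₁.length = p₂.length := by rw [key p₁ s₁ h1, key p₂ s₂ h2]
  have h12 : p₁ ++ ([y, z] ++ s₁) = p₂ ++ ([y, z] ++ s₂) := by
    rw [← List.append_assoc, ← List.append_assoc, h1, h2]
  obtain ⟨hp, ht⟩ := List.append_inj h12 hl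
  exact ⟨hp, List.append_cancel_left ht⟩

lemma P2 (n k : ℕ) (hn : 0 < n) : DistinctBetween n (restrict (uWord n k) (Xset n)) := by
  intro z i j hij hi hj
  obtain ⟨hiL, hzi⟩ := w_getElem' n k i z hi
  obtain ⟨hjL, hzj⟩ := w_getElem' n k j z hj
  have hjw : j ≤ (restrict (uWord n k) (Xset n)).length := by
    rw [length_restrict_uWord]; omega
  obtain ⟨qi, ri, hri, hidef⟩ : ∃ q r, r < 2 * n + 1 ∧ q * (2 * n + 1) + r = i :=
    ⟨i / (2 * n + 1), i % (2 * n + 1), Nat.mod_lt _ (by omega), Nat.div_add_mod' i _⟩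
  obtain ⟨qj, rj, hrj, hjdef⟩ : ∃ q r, r < 2 * n + 1 ∧ q * (2 * n + 1) + r = j :=
    ⟨j / (2 * n + 1), j % (2 * n + 1), Nat.mod_lt _ (by omega), Nat.div_add_mod' j _⟩
  have hfi : fIdx n i = letterF n qi ri := by rw [← hidef]; exact fIdx_eval n qi ri hri
  have hfj : fIdx n j = letterF n qj rj := by rw [← hjdef]; exact fIdx_eval n qj rj hrj
  have hletter : letterF n qi ri = letterF n qj rj := by rw [← hfi, ← hfj, ← hzi, ← hzj]
  rcases Nat.even_or_odd ri with ⟨e, he⟩ | ⟨e, he⟩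
  · -- ri even: z is an x- or z-variable
    have he2 : ri = 2 * e := by omega
    have hen : e ≤ n := by omega
    obtain ⟨d, hd, hsh⟩ := letterF_shape n qi
    obtain ⟨d2, hd2, hsh2⟩ := letterF_shape n qj
    -- rj is even as well
    have hrje : rj % 2 = 0 := by
      by_contra hcon
      obtain ⟨f, hf⟩ : Odd rj := Nat.odd_iff.mpr (by omega)
      rw [he2, hsh e, hf, letterF_y] at hletter
      unfold varY at hletter
      omega
    obtain ⟨f, hf⟩ : ∃ f, rj = 2 * f := ⟨rj / 2, by omega⟩
    have hfn : f ≤ n := by omega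
    rw [he2, hsh e, hf, hsh2 f] at hletter
    have hdd : d = d2 := by omega
    have hmod : (e + qi / 2) % (n + 1) = (f + qj / 2) % (n + 1) := by omega
    have hqipar : qi % 2 = qj % 2 := by omega
    have hqne : qi ≠ qj := by
      intro hcon
      subst hcon
      have h1 : e + qi / 2 = f + qi / 2 := by
        refine mod_inj (n + 1) _ _ hmod ?_ ?_ <;> omega
      omega
    have hqq : qi < qj := by
      by_contra hcon
      push_neg at hcon
      have h1 : qj + 1 ≤ qi := by omega
      have h2 : (qj + 1) * (2 * n + 1) ≤ qi * (2 * n + 1) := Nat.mul_le_mul_right _ h1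
      have h3 : (qj + 1) * (2 * n + 1) = qj * (2 * n + 1) + (2 * n + 1) := by ring
      omega
    have hq2 : qi + 2 ≤ qj := by omega
    obtain ⟨d3, hd3, hsh3⟩ := letterF_shape n (qi + 1)
    have e1 : (qi + 1) * (2 * n + 1) = qi * (2 * n + 1) + (2 * n + 1) := by ring
    have e2 : (qi + 2) * (2 * n + 1) = qi * (2 * n + 1) + 2 * (2 * n + 1) := by ring
    have e3 : (qi + 2) * (2 * n + 1) ≤ qj * (2 * n + 1) := Nat.mul_le_mul_right _ hq2
    refine card_between_ge hjw (fun s => (qi + 1) * (2 * n + 1) + 2 * s)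
      (fun s => 3 * ((s + (qi + 1) / 2) % (n + 1)) + d3)
      (fun s hs => by beta_reduce; exact ⟨by omega, by omega⟩) (fun s hs => ?_)
      (fun s hs t ht hgg => ?_)
    · beta_reduce
      have hpsL : (qi + 1) * (2 * n + 1) + 2 * s < 2 * (n + 1) * (2 * n + 1) := by omega
      rw [w_getElem n k _ hpsL, fIdx_eval n (qi + 1) (2 * s) (by omega), hsh3 s]
    · beta_reduce at hgg
      have h1 : (s + (qi + 1) / 2) % (n + 1) = (t + (qi + 1) / 2) % (n + 1) := by omega
      have h2 : s + (qi + 1) / 2 = t + (qi + 1) / 2 := by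
        refine mod_inj (n + 1) _ _ h1 ?_ ?_ <;> omega
      omega
  · -- ri odd: z is a y-variable
    have he2 : ri = 2 * e + 1 := by omega
    have hen : e < n := by omega
    have hYi : letterF n qi ri = varY (e + 1) := by rw [he2]; exact letterF_y n qi e
    have hrr : rj = ri := by
      rcases Nat.even_or_odd rj with ⟨f, hf⟩ | ⟨f, hf⟩
      · exfalso
        have hf2 : rj = 2 * f := by omega
        obtain ⟨d, hd, hsh⟩ := letterF_shape n qj
        rw [hYi, hf2, hsh f] at hletter
        unfold varY at hletter
        omega
      · rw [hYi, hf, letterF_y] at hletter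
        unfold varY at hletter
        omega
    have hqq : qi < qj := by
      by_contra hcon
      push_neg at hcon
      have h2 : qj * (2 * n + 1) ≤ qi * (2 * n + 1) := Nat.mul_le_mul_right _ hcon
      omega
    have hstep : i + (2 * n + 1) ≤ j := by
      have h1 : (qi + 1) * (2 * n + 1) ≤ qj * (2 * n + 1) := Nat.mul_le_mul_right _ (by omega)
      have h2 : (qi + 1) * (2 * n + 1) = qi * (2 * n + 1) + (2 * n + 1) := by ring
      omega
    obtain ⟨d, hd, hsh⟩ := letterF_shape n qi
    have e1 : (qi + 1) * (2 * n + 1) = qi * (2 * n + 1) + (2 * n + 1) := by ring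
    refine card_between_ge hjw (fun s => i + 1 + 2 * s)
      (fun s => if e + 1 + s ≤ n then 3 * ((e + 1 + s + qi / 2) % (n + 1)) + d
        else varY (e + s - n + 1))
      (fun s hs => by beta_reduce; exact ⟨by omega, by omega⟩) (fun s hs => ?_)
      (fun s hs t ht hgg => ?_)
    · beta_reduce
      have hpsL : i + 1 + 2 * s < 2 * (n + 1) * (2 * n + 1) := by omega
      rw [w_getElem n k _ hpsL]
      by_cases hb : e + 1 + s ≤ n
      · have hrw : i + 1 + 2 * s = qi * (2 * n + 1) + 2 * (e + 1 + s) := by omega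
        rw [hrw, fIdx_eval n qi _ (by omega), hsh (e + 1 + s), if_pos hb]
      · have hrw : i + 1 + 2 * s = (qi + 1) * (2 * n + 1) + (2 * (e + s - n) + 1) := by omega
        rw [hrw, fIdx_eval n (qi + 1) _ (by omega), letterF_y, if_neg hb]
    · beta_reduce at hgg
      by_cases hbs : e + 1 + s ≤ n <;> by_cases hbt : e + 1 + t ≤ n
      · rw [if_pos hbs, if_pos hbt] at hgg
        have h1 : (e + 1 + s + qi / 2) % (n + 1) = (e + 1 + t + qi / 2) % (n + 1) := by omega
        have h2 : e + 1 + s + qi / 2 = e + 1 + t + qi / 2 := by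
          refine mod_inj (n + 1) _ _ h1 ?_ ?_ <;> omega
        omega
      · rw [if_pos hbs, if_neg hbt] at hgg
        unfold varY at hgg
        omega
      · rw [if_neg hbs, if_pos hbt] at hgg
        unfold varY at hgg
        omega
      · rw [if_neg hbs, if_neg hbt] at hgg
        unfold varY at hgg
        omega


/-- **Properties (P0), (P1), (P2) of the words `u_n`.** For positive integers `n`, `k` and
`m ≥ 1`, with `v_n = u_n^{m+1}`: (P0) `u_n(X_n) ≠ v_n(X_n)`; (P1) for all variables `y, z`,
the two-letter word `yz` occurs as a factor of `u_n(X_n)` at most once; (P2) for every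
variable `z`, between any two occurrences of `z` in `u_n(X_n)` there occur at least `n`
pairwise distinct variables. -/
theorem uWord_properties (n k m : ℕ) (hn : 0 < n) (hk : 0 < k) (hm : 1 ≤ m) :
    restrict (uWord n k) (Xset n) ≠ restrict (powerList (m + 1) (uWord n k)) (Xset n) ∧
    (∀ y z : ℕ, FactorAtMostOnce [y, z] (restrict (uWord n k) (Xset n))) ∧
    DistinctBetween n (restrict (uWord n k) (Xset n)) := by
  exact ⟨P0 n k m hn hm, fun y z => P1 n k hn y z, P2 n k hn⟩
end

section
/- Let S be a finite semigroup in LDS, let k be a positive integer such that s^k is idempotent for every s ∈ S, and let m be a positive integer such that g^m is the identity element of G for every subgroup G of S. Then for every n > |S|, the semigroup S satisfies the identity u_n ≈ u_n^{m+1}, where u_n is the word built from the parameters n and k. -/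
/-! ### Identities and finite bases -/

/-- A semigroup `S` satisfies the identity `u ≈ v` (for words `u`, `v` in the free semigroup on
the countably infinite set of variables `ℕ`) if every homomorphism from the free semigroup to
`S` — equivalently, every substitution `f : ℕ → S` — equalizes `u` and `v`. -/
def Satisfies (S : Type*) [Semigroup S] (u v : FreeSemigroup ℕ) : Prop :=
  ∀ f : ℕ → S, FreeSemigroup.lift f u = FreeSemigroup.lift f v

/-- A semigroup is finitely based if there is a finite set of identities it satisfies such that
every semigroup satisfying those identities satisfies every identity of `S`. -/
def FinitelyBased (S : Type*) [Semigroup S] : Prop :=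
  ∃ B : Finset (FreeSemigroup ℕ × FreeSemigroup ℕ),
    (∀ p ∈ B, Satisfies S p.1 p.2) ∧
    ∀ (T : Type) [Semigroup T], (∀ p ∈ B, Satisfies T p.1 p.2) →
      ∀ u v : FreeSemigroup ℕ, Satisfies S u v → Satisfies T u v

/-- `T` belongs to the variety generated by `S`: `T` satisfies every identity of `S`. -/
def InVarietyOf (T S : Type*) [Semigroup T] [Semigroup S] : Prop :=
  ∀ u v : FreeSemigroup ℕ, Satisfies S u v → Satisfies T u v

/-! ### Green's relations and the pseudovarieties `DS` and `LDS` -/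

section Green
variable {S : Type*} [Semigroup S]

/-- The principal right ideal `xS¹ = {x} ∪ xS`. -/
def rIdeal (x : S) : Set S := insert x {z | ∃ u, x * u = z}

/-- The principal left ideal `S¹x = {x} ∪ Sx`. -/
def lIdeal (x : S) : Set S := insert x {z | ∃ u, u * x = z}

/-- Green's relation `R`: `x R y` iff `xS¹ = yS¹`. -/
def GreenR (x y : S) : Prop := rIdeal x = rIdeal y

/-- Green's relation `L`: `x L y` iff `S¹x = S¹y`. -/
def GreenL (x y : S) : Prop := lIdeal x = lIdeal y

/-- Green's relation `D = R ∘ L`. -/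
def GreenD (x y : S) : Prop := ∃ z, GreenR x z ∧ GreenL z y

/-- The local subsemigroup `eSe = {ese : s ∈ S}` of `S` (the local submonoid at `e` when `e`
is idempotent). -/
def localSub (e : S) : Subsemigroup S where
  carrier := {x | ∃ s : S, x = e * s * e}
  mul_mem' := by
    rintro a b ⟨s, rfl⟩ ⟨t, rfl⟩
    exact ⟨s * e * (e * t), by simp [mul_assoc]⟩

end Green

/-- Membership in the pseudovariety `DS`: every `D`-class containing an idempotent is closed
under multiplication. -/
def MemDS (S : Type*) [Semigroup S] [Finite S] : Prop :=
  ∀ e x y : S, e * e = e → GreenD x e → GreenD y e → GreenD (x * y) e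

/-- Membership in the pseudovariety `LDS`: every local submonoid `eSe` (for `e` idempotent)
lies in `DS`. -/
def MemLDS (S : Type*) [Semigroup S] [Finite S] : Prop :=
  ∀ e : S, e * e = e → MemDS (localSub e)

/-! ### Powers in semigroups and subgroups of semigroups -/

/-- `spow x n` is the `n`-th power `x^n` of an element of a semigroup, for `n ≥ 1`
(with the convention `spow x 0 = x`). -/
def spow {S : Type*} [Semigroup S] (x : S) : ℕ → S
  | 0 => x
  | 1 => x
  | n + 2 => spow x (n + 1) * x

/-- `G` is a subgroup of the semigroup `S` with identity element `e`: a subsemigroup that is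
a group under the induced multiplication, with identity `e`. -/
def IsSubgroupWithIdentity {S : Type*} [Semigroup S] (G : Subsemigroup S) (e : S) : Prop :=
  e ∈ G ∧ (∀ g ∈ G, e * g = g ∧ g * e = g) ∧ ∀ g ∈ G, ∃ h ∈ G, g * h = e ∧ h * g = e

/-! ### Auxiliary machinery for the proof -/

namespace LDSAux

section Abstract

variable {T : Type*} [Monoid T]

/-- `x` is `J`-below `y` (in a monoid). -/
def leJ (x y : T) : Prop := ∃ a b : T, a * y * b = x

lemma leJ_refl (x : T) : leJ x x := ⟨1, 1, by simp⟩

lemma leJ_trans {x y z : T} (h1 : leJ x y) (h2 : leJ y z) : leJ x z := by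
  obtain ⟨a, b, rfl⟩ := h1
  obtain ⟨c, d, rfl⟩ := h2
  exact ⟨a * c, d * b, by simp [mul_assoc]⟩

lemma iterate_sandwich {a c x : T} (h : x = a * x * c) : ∀ t, x = a ^ t * x * c ^ t := by
  intro t
  induction t with
  | zero => simp
  | succ t ih =>
    calc x = a * x * c := h
    _ = a * (a ^ t * x * c ^ t) * c := by rw [← ih]
    _ = a ^ (t+1) * x * c ^ (t+1) := by
        rw [pow_succ' a t, pow_succ c t]; simp [mul_assoc]

variable (k : ℕ)

section Stab
variable (hk : 1 ≤ k) (hidem : ∀ t : T, t ^ k * t ^ k = t ^ k)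

include hk hidem in
lemma rStab {x u : T} (h : leJ x (x * u)) : ∃ v, (x * u) * v = x := by
  obtain ⟨a, b, hab⟩ := h
  have h1 : x = a * x * (u * b) := by
    conv_lhs => rw [← hab]
    simp [mul_assoc]
  have h2 := iterate_sandwich h1 k
  have h3 : x * (u * b) ^ k = x := by
    calc x * (u * b) ^ k = (a ^ k * x * (u * b) ^ k) * (u * b) ^ k := by rw [← h2]
    _ = a ^ k * x * ((u * b) ^ k * (u * b) ^ k) := by simp [mul_assoc]
    _ = a ^ k * x * (u * b) ^ k := by rw [hidem]
    _ = x := h2.symm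
  refine ⟨b * (u * b) ^ (k - 1), ?_⟩
  calc (x * u) * (b * (u * b) ^ (k - 1)) = x * ((u * b) * (u * b) ^ (k - 1)) := by
        simp [mul_assoc]
  _ = x * (u * b) ^ k := by rw [← pow_succ', show (k-1)+1 = k by omega]
  _ = x := h3

include hk hidem in
lemma lStab {x u : T} (h : leJ x (u * x)) : ∃ v, v * (u * x) = x := by
  obtain ⟨a, b, hab⟩ := h
  have h1 : x = (a * u) * x * b := by
    conv_lhs => rw [← hab]
    simp [mul_assoc]
  have h2 := iterate_sandwich h1 k
  have h3 : (a * u) ^ k * x = x := by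
    calc (a * u) ^ k * x = (a * u) ^ k * ((a * u) ^ k * x * b ^ k) := by rw [← h2]
    _ = ((a * u) ^ k * (a * u) ^ k) * x * b ^ k := by simp [mul_assoc]
    _ = (a * u) ^ k * x * b ^ k := by rw [hidem]
    _ = x := h2.symm
  refine ⟨(a * u) ^ (k - 1) * a, ?_⟩
  calc ((a * u) ^ (k - 1) * a) * (u * x) = ((a * u) ^ (k - 1) * (a * u)) * x := by
        simp [mul_assoc]
  _ = (a * u) ^ k * x := by rw [← pow_succ, show (k-1)+1 = k by omega]
  _ = x := h3

end Stab

lemma mem_rIdeal_self (x : T) : x ∈ rIdeal x := Set.mem_insert _ _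

lemma mem_lIdeal_self (x : T) : x ∈ lIdeal x := Set.mem_insert _ _

lemma rIdeal_eq {x y : T} (h1 : ∃ u, x * u = y) (h2 : ∃ v, y * v = x) :
    rIdeal x = rIdeal y := by
  obtain ⟨u, hu⟩ := h1
  obtain ⟨v, hv⟩ := h2
  ext z
  simp only [rIdeal, Set.mem_insert_iff, Set.mem_setOf_eq]
  constructor
  · rintro (rfl | ⟨w, rfl⟩)
    · exact Or.inr ⟨v, hv⟩
    · exact Or.inr ⟨v * w, by rw [← hv, mul_assoc]⟩
  · rintro (rfl | ⟨w, rfl⟩)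
    · exact Or.inr ⟨u, hu⟩
    · exact Or.inr ⟨u * w, by rw [← hu, mul_assoc]⟩

lemma lIdeal_eq {x y : T} (h1 : ∃ u, u * x = y) (h2 : ∃ v, v * y = x) :
    lIdeal x = lIdeal y := by
  obtain ⟨u, hu⟩ := h1
  obtain ⟨v, hv⟩ := h2
  ext z
  simp only [lIdeal, Set.mem_insert_iff, Set.mem_setOf_eq]
  constructor
  · rintro (rfl | ⟨w, rfl⟩)
    · exact Or.inr ⟨v, hv⟩
    · exact Or.inr ⟨w * v, by rw [← hv, mul_assoc]⟩
  · rintro (rfl | ⟨w, rfl⟩)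
    · exact Or.inr ⟨u, hu⟩
    · exact Or.inr ⟨w * u, by rw [← hu, mul_assoc]⟩

lemma leJ_of_mem_rIdeal {x z : T} (h : x ∈ rIdeal z) : leJ x z := by
  rcases h with rfl | ⟨u, hu⟩
  · exact leJ_refl x
  · exact ⟨1, u, by simpa using hu⟩

lemma leJ_of_mem_lIdeal {x z : T} (h : x ∈ lIdeal z) : leJ x z := by
  rcases h with rfl | ⟨u, hu⟩
  · exact leJ_refl x
  · exact ⟨u, 1, by simpa using hu⟩

lemma d_to_j {x y : T} (h : GreenD x y) : leJ x y ∧ leJ y x := by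
  obtain ⟨z, hR, hL⟩ := h
  have hz_in_x : z ∈ rIdeal x := by rw [hR]; exact mem_rIdeal_self z
  have hx_in_z : x ∈ rIdeal z := by rw [← hR]; exact mem_rIdeal_self x
  have hz_in_y : z ∈ lIdeal y := by rw [← hL]; exact mem_lIdeal_self z
  have hy_in_z : y ∈ lIdeal z := by rw [hL]; exact mem_lIdeal_self y
  exact ⟨leJ_trans (leJ_of_mem_rIdeal hx_in_z) (leJ_of_mem_lIdeal hz_in_y),
    leJ_trans (leJ_of_mem_lIdeal hy_in_z) (leJ_of_mem_rIdeal hz_in_x)⟩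

section WithIdem
variable (hk : 1 ≤ k) (hidem : ∀ t : T, t ^ k * t ^ k = t ^ k)

include hk hidem in
lemma j_to_d {x y : T} (hxy : leJ x y) (hyx : leJ y x) : GreenD x y := by
  obtain ⟨a, b, hab⟩ := hxy
  obtain ⟨c, d, hcd⟩ := hyx
  have hx : x = (a * c) * x * (d * b) := by
    conv_lhs => rw [← hab]
    conv_lhs => rw [← hcd]
    simp [mul_assoc]
  have h1 : leJ x (x * d) := by
    refine ⟨a * c, b, ?_⟩
    calc (a * c) * (x * d) * b = (a * c) * x * (d * b) := by simp [mul_assoc]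
    _ = x := hx.symm
  obtain ⟨v, hv⟩ := rStab k hk hidem h1
  have hR : GreenR x (x * d) := rIdeal_eq ⟨d, rfl⟩ ⟨v, hv⟩
  have hcxd : c * (x * d) = y := by rw [← hcd]; simp [mul_assoc]
  have h2 : leJ (x * d) (c * (x * d)) := by
    refine ⟨a, b * d, ?_⟩
    rw [hcxd, ← hab]; simp [mul_assoc]
  obtain ⟨w, hw⟩ := lStab k hk hidem h2
  have hL : GreenL (x * d) y := by
    refine lIdeal_eq ⟨c, hcxd⟩ ⟨w, ?_⟩
    rw [← hcxd]; exact hw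
  exact ⟨x * d, hR, hL⟩

include hk hidem in
lemma rot (p q : T) : leJ ((p * q) ^ k) ((q * p) ^ k) := by
  have G2 : ∀ t, (p * q) ^ (t + 1) = p * (q * p) ^ t * q := by
    intro t
    induction t with
    | zero => simp
    | succ t ih =>
      calc (p * q) ^ (t + 2) = (p * q) ^ (t + 1) * (p * q) := by rw [pow_succ]
      _ = (p * (q * p) ^ t * q) * (p * q) := by rw [ih]
      _ = p * ((q * p) ^ t * (q * p)) * q := by simp [mul_assoc]
      _ = p * (q * p) ^ (t + 1) * q := by rw [pow_succ]
  have h2k : (p * q) ^ (k + k) = (p * q) ^ k := by rw [pow_add, hidem]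
  have hform : (p * q) ^ k = p * ((q * p) ^ (k - 1) * (q * p) ^ k) * q := by
    rw [← pow_add, ← h2k, show k + k = (k - 1 + k) + 1 by omega, G2]
  refine ⟨p * (q * p) ^ (k - 1), q, ?_⟩
  calc p * (q * p) ^ (k - 1) * (q * p) ^ k * q
      = p * ((q * p) ^ (k - 1) * (q * p) ^ k) * q := by simp [mul_assoc]
  _ = (p * q) ^ k := hform.symm

variable (hDS : ∀ ε x y : T, ε * ε = ε → GreenD x ε → GreenD y ε → GreenD (x * y) ε)

include hk hidem hDS in
lemma contentLemma {ε a b : T} (hε : ε * ε = ε) (ha : leJ ε a) (hb : leJ ε b) :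
    leJ ε (a * b) := by
  obtain ⟨x, y, hxy⟩ := ha
  obtain ⟨u, v, huv⟩ := hb
  set c := a * (y * u) * b with hc_def
  have hc : x * c * v = ε := by
    have h0 : x * c * v = (x * a * y) * (u * b * v) := by simp [hc_def, mul_assoc]
    rw [h0, hxy, huv, hε]
  set w := c * (v * x) with hw_def
  have hεpow : ∀ t, ε ^ (t + 1) = ε := by
    intro t
    induction t with
    | zero => simp
    | succ t ih => rw [pow_succ, ih, hε]
  have G1 : ∀ t, (x * c * v) ^ (t + 1) = x * (c * (v * x)) ^ t * (c * v) := by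
    intro t
    induction t with
    | zero => simp [mul_assoc]
    | succ t ih =>
      calc (x * c * v) ^ (t + 2) = (x * c * v) * (x * c * v) ^ (t + 1) := by rw [pow_succ']
      _ = (x * c * v) * (x * (c * (v * x)) ^ t * (c * v)) := by rw [ih]
      _ = x * ((c * (v * x)) * (c * (v * x)) ^ t) * (c * v) := by simp [mul_assoc]
      _ = x * (c * (v * x)) ^ (t + 1) * (c * v) := by rw [pow_succ']
  have hεf : leJ ε (w ^ k) := by
    refine ⟨x, c * v, ?_⟩
    rw [← hεpow k, ← hc, G1 k, hw_def]
  have hfε : leJ (w ^ k) ε := by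
    have hw2 : w * w = (c * v) * ε * x := by
      conv_rhs => rw [← hc]
      simp [hw_def, mul_assoc]
    refine ⟨w ^ (2 * k - 2) * (c * v), x, ?_⟩
    have hsplit2 : w ^ k = w ^ (2 * k - 2) * (w * w) := by
      rw [← hidem w, ← pow_add, show k + k = (2 * k - 2) + 2 by omega, pow_add, pow_two]
    conv_rhs => rw [hsplit2, hw2]
    simp [mul_assoc]
  set r := (y * u) * (b * (v * x)) with hr_def
  have hw_ar : w = a * r := by simp [hw_def, hc_def, hr_def, mul_assoc]
  set α := a * (y * u) with hα_def
  set β := b * (v * x) with hβ_def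
  have hw_αβ : w = α * β := by simp [hw_def, hc_def, hα_def, hβ_def, mul_assoc]
  have hra : leJ ((r * a) ^ k) (w ^ k) := by
    have h := rot k hk hidem r a
    rwa [← hw_ar] at h
  have haw : leJ (w ^ k) ((r * a) ^ k) := by
    have h := rot k hk hidem a r
    rwa [← hw_ar] at h
  have hβα : leJ ((β * α) ^ k) (w ^ k) := by
    have h := rot k hk hidem β α
    rwa [← hw_αβ] at h
  have hαβ : leJ (w ^ k) ((β * α) ^ k) := by
    have h := rot k hk hidem α β
    rwa [← hw_αβ] at h
  have d1 : GreenD ((r * a) ^ k) ε :=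
    j_to_d k hk hidem (leJ_trans hra hfε) (leJ_trans hεf haw)
  have d2 : GreenD ((β * α) ^ k) ε :=
    j_to_d k hk hidem (leJ_trans hβα hfε) (leJ_trans hεf hαβ)
  have dd := hDS ε _ _ hε d1 d2
  have hJ : leJ ε ((r * a) ^ k * (β * α) ^ k) := (d_to_j dd).2
  have hsplit : (r * a) ^ k * (β * α) ^ k =
      ((r * a) ^ (k - 1) * r) * (a * b) * ((v * x) * α * (β * α) ^ (k - 1)) := by
    have e1 : (r * a) ^ k = (r * a) ^ (k - 1) * r * a := by
      rw [show k = (k - 1) + 1 by omega, pow_succ]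
      simp [mul_assoc]
    have e2 : (β * α) ^ k = b * ((v * x) * α * (β * α) ^ (k - 1)) := by
      rw [show k = (k - 1) + 1 by omega, pow_succ']
      simp [hβ_def, mul_assoc]
    rw [e1, e2]; simp [mul_assoc]
  exact leJ_trans hJ ⟨_, _, hsplit.symm⟩

include hk hidem hDS in
lemma contentLemma_list {ε : T} (hε : ε * ε = ε) :
    ∀ l : List T, l ≠ [] → (∀ g ∈ l, leJ ε g) → leJ ε l.prod := by
  intro l
  induction l with
  | nil => simp
  | cons g tl ih =>
    intro _ h
    cases tl with
    | nil => simpa using h g (by simp)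
    | cons y tl' =>
      rw [List.prod_cons]
      exact contentLemma k hk hidem hDS hε (h g (by simp))
        (ih (by simp) (fun a ha => h a (by simp [ha])))

include hk hidem hDS in
lemma main_lemma [Finite T] (n : ℕ) (hn : Nat.card T < n)
    (C : ℕ → T) (ls : ℕ → List T) (Γ : List T)
    (hC : ∀ t, t ≤ n → C t = (ls t).prod)
    (hne : ∀ t, t ≤ n → ls t ≠ [])
    (hsub : ∀ t, t ≤ n → ∀ g ∈ ls t, g ∈ Γ)
    (hsup : ∀ t, t ≤ n → ∀ g ∈ Γ, g ∈ ls t) :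
    (((List.range (n+1)).map C).prod) ^ k * ((List.range (n+1)).map C).prod
      = ((List.range (n+1)).map C).prod := by
  have PRS : ∀ a b : ℕ, ((List.range (a+b)).map C).prod
      = ((List.range a).map C).prod * ((List.range b).map (fun t => C (a+t))).prod := by
    intro a b
    induction b with
    | zero => simp
    | succ b ih =>
      rw [show a + (b+1) = (a+b)+1 from rfl, List.range_succ, List.range_succ]
      simp only [List.map_append, List.prod_append, ih, List.map_cons, List.map_nil,
        List.prod_cons, List.prod_nil]
      simp [mul_assoc]
  set s : T := ((List.range (n+1)).map C).prod with hs_def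
  have key : ∀ i j : ℕ, i < j → j ≤ n →
      ((List.range (i+1)).map C).prod = ((List.range (j+1)).map C).prod →
      s ^ k * s = s := by
    intro i j hij hjn hpreq
    set p : T := ((List.range (i+1)).map C).prod with hp_def
    set W : T := ((List.range (j-i)).map (fun t => C (i+1+t))).prod with hW_def
    have hloop : p = p * W := by
      conv_lhs => rw [hpreq]
      rw [show j + 1 = (i+1) + (j-i) by omega, PRS (i+1) (j-i), hp_def, hW_def]
    have hpow : ∀ t, p * W ^ t = p := by
      intro t
      induction t with
      | zero => simp
      | succ t ih => rw [pow_succ, ← mul_assoc, ih, ← hloop]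
    set ε : T := W ^ k with hε_def
    have hε : ε * ε = ε := hidem W
    have hWsplit : W = C (i+1) * ((List.range (j-i-1)).map (fun t => C (i+1+(t+1)))).prod := by
      rw [hW_def, show j - i = (j-i-1)+1 by omega, List.range_succ_eq_map]
      simp [List.map_map, Function.comp_def, Nat.succ_eq_add_one]
    have hleJγ : ∀ γ ∈ Γ, leJ ε γ := by
      intro γ hγ
      obtain ⟨l₁, l₂, hls⟩ := List.append_of_mem (hsup (i+1) (by omega) γ hγ)
      have hC1 : C (i+1) = l₁.prod * γ * l₂.prod := by
        rw [hC (i+1) (by omega), hls]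
        simp [List.prod_append, mul_assoc]
      set Wrest : T := ((List.range (j-i-1)).map (fun t => C (i+1+(t+1)))).prod with hWrest
      refine ⟨l₁.prod, l₂.prod * (Wrest * W ^ (k-1)), ?_⟩
      have hWk : ε = W * W ^ (k-1) := by
        rw [hε_def, ← pow_succ', show (k-1)+1 = k by omega]
      rw [hWk, hWsplit, hC1]
      simp [mul_assoc]
    have hεs : leJ ε s := by
      refine contentLemma_list k hk hidem hDS hε ((List.range (n+1)).map C) (by simp) ?_
      intro x hx
      obtain ⟨t, ht, rfl⟩ := List.mem_map.mp hx
      have ht' : t ≤ n := by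
        have := List.mem_range.mp ht
        omega
      rw [hC t ht']
      exact contentLemma_list k hk hidem hDS hε (ls t) (hne t ht')
        (fun g hg => hleJγ g (hsub t ht' g hg))
    have hsε : leJ s ε := by
      refine ⟨p, ((List.range (n-i)).map (fun t => C (i+1+t))).prod, ?_⟩
      have h1 : s = p * ((List.range (n-i)).map (fun t => C (i+1+t))).prod := by
        rw [hs_def, show n + 1 = (i+1) + (n-i) by omega, PRS (i+1) (n-i)]
      conv_rhs => rw [h1]
      conv_rhs => rw [show p = p * ε from (hpow k).symm]
    have hDd : GreenD s ε := j_to_d k hk hidem hsε hεs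
    have hD2 := hDS ε s s hε hDd hDd
    have hls2 : leJ s (s * s) := leJ_trans hsε (d_to_j hD2).2
    obtain ⟨v, hv⟩ := rStab k hk hidem hls2
    have hpows : ∀ t, s ^ (t+1) * v ^ t = s := by
      intro t
      induction t with
      | zero => simp
      | succ t ih =>
        calc s ^ (t+2) * v ^ (t+1) = s ^ t * ((s * s) * v) * v ^ t := by
              rw [pow_succ, pow_succ, pow_succ']
              simp [mul_assoc]
        _ = s ^ t * s * v ^ t := by rw [hv]
        _ = s ^ (t+1) * v ^ t := by rw [pow_succ]
        _ = s := ih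
    have hsk : s = s ^ k * (s * v ^ k) := by
      conv_lhs => rw [← hpows k]
      rw [pow_succ]
      simp [mul_assoc]
    have h5 : s ^ k * s = s ^ k * (s ^ k * (s * v ^ k)) := by rw [← hsk]
    rw [h5, ← mul_assoc, hidem s, ← hsk]
  letI : Fintype T := Fintype.ofFinite T
  have hcard' : Fintype.card T < Fintype.card (Fin (n+1)) := by
    rw [Fintype.card_fin, ← Nat.card_eq_fintype_card]
    omega
  obtain ⟨t₁, t₂, h12, heq⟩ := Fintype.exists_ne_map_eq_of_card_lt
    (fun t : Fin (n+1) => ((List.range (t.1+1)).map C).prod) hcard'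
  rcases lt_trichotomy t₁.1 t₂.1 with h | h | h
  · exact key t₁.1 t₂.1 h (Nat.lt_succ_iff.mp t₂.isLt) heq
  · exact absurd (Fin.ext h) h12
  · exact key t₂.1 t₁.1 h (Nat.lt_succ_iff.mp t₁.isLt) heq.symm

end WithIdem

end Abstract

section Spow

variable {S : Type*} [Semigroup S]

lemma spow_one (x : S) : spow x 1 = x := rfl

lemma spow_succ (x : S) : ∀ t, 1 ≤ t → spow x (t+1) = spow x t * x := by
  intro t ht
  match t, ht with
  | (t'+1), _ => rfl

lemma spow_add (x : S) : ∀ a, 1 ≤ a → ∀ b, 1 ≤ b → spow x (a+b) = spow x a * spow x b := by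
  intro a ha b hb
  induction b with
  | zero => omega
  | succ b ih =>
    rcases Nat.eq_or_lt_of_le hb with hb1 | hb1
    · rw [← hb1, spow_succ x a ha, spow_one]
    · have hb' : 1 ≤ b := by omega
      rw [show a + (b+1) = (a+b)+1 from rfl, spow_succ x (a+b) (by omega), ih hb',
        spow_succ x b hb', mul_assoc]

lemma map_pow_spow {T : Type*} [Monoid T] (φ : T → S)
    (hφ : ∀ a b : T, φ (a * b) = φ a * φ b) (x : T) :
    ∀ j, 1 ≤ j → φ (x ^ j) = spow (φ x) j := by
  intro j hj
  induction j with
  | zero => omega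
  | succ j ih =>
    rcases Nat.eq_or_lt_of_le hj with hj1 | hj1
    · rw [← hj1, pow_one, spow_one]
    · have hj' : 1 ≤ j := by omega
      rw [pow_succ, hφ, ih hj', spow_succ _ j hj']

lemma coe_spow (x : S) : ∀ j, 1 ≤ j → ((spow x j : S) : WithOne S) = (x : WithOne S) ^ j := by
  intro j hj
  induction j with
  | zero => omega
  | succ j ih =>
    rcases Nat.eq_or_lt_of_le hj with hj1 | hj1
    · rw [← hj1, spow_one, pow_one]
    · have hj' : 1 ≤ j := by omega
      rw [spow_succ _ j hj', pow_succ, WithOne.coe_mul, ih hj']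

lemma prod_map_mul_hom {T : Type*} [Monoid T] {N : Type*} [Monoid N] (φ : T → N)
    (hφ : ∀ a b : T, φ (a * b) = φ a * φ b) :
    ∀ l : List T, l ≠ [] → φ l.prod = (l.map φ).prod := by
  intro l
  induction l with
  | nil => simp
  | cons x tl ih =>
    intro _
    cases tl with
    | nil => simp
    | cons y tl' =>
      rw [List.prod_cons, hφ, ih (by simp)]
      simp

end Spow

section Words

variable {S : Type*} [Semigroup S] (f : ℕ → S)

/-- The substitution into `S¹ = WithOne S`. -/
def Fv (v : ℕ) : WithOne S := (f v : WithOne S)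

/-- Evaluation of a word (given as a list of variables) in `S¹`. -/
def EL (l : List ℕ) : WithOne S := (l.map (Fv f)).prod

lemma EL_nil : EL f [] = 1 := rfl

lemma EL_cons (v : ℕ) (l : List ℕ) : EL f (v :: l) = Fv f v * EL f l := by
  simp [EL]

lemma EL_append (l₁ l₂ : List ℕ) : EL f (l₁ ++ l₂) = EL f l₁ * EL f l₂ := by
  simp [EL]

lemma EL_single (v : ℕ) : EL f [v] = Fv f v := by simp [EL]

lemma EL_replicate (j v : ℕ) : EL f (List.replicate j v) = (Fv f v) ^ j := by
  simp [EL]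

lemma EL_flatMap {ι : Type*} (L : List ι) (h : ι → List ℕ) :
    EL f (L.flatMap h) = (L.map (fun i => EL f (h i))).prod := by
  induction L with
  | nil => simp [EL]
  | cons i L ih => rw [List.flatMap_cons, EL_append, ih, List.map_cons, List.prod_cons]

lemma lift_coe : ∀ (l : List ℕ) (a : ℕ),
    ((FreeSemigroup.lift f ⟨a, l⟩ : S) : WithOne S) = Fv f a * EL f l := by
  intro l
  induction l with
  | nil =>
    intro a
    show ((FreeSemigroup.lift f (FreeSemigroup.of a) : S) : WithOne S) = _
    rw [FreeSemigroup.lift_of]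
    simp [EL_nil, Fv]
  | cons x t ih =>
    intro a
    have hmul : (⟨a, x :: t⟩ : FreeSemigroup ℕ) = FreeSemigroup.of a * ⟨x, t⟩ := rfl
    rw [hmul, map_mul, WithOne.coe_mul, FreeSemigroup.lift_of, ih, EL_cons]
    simp [Fv, mul_assoc]

lemma lift_coe' (l : List ℕ) (hl : l ≠ []) :
    ((FreeSemigroup.lift f (wOfList l) : S) : WithOne S) = EL f l := by
  obtain ⟨a, t, rfl⟩ := List.exists_cons_of_ne_nil hl
  rw [show wOfList (a :: t) = ⟨a, t⟩ from rfl, lift_coe, EL_cons]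

lemma powerList_succ (j : ℕ) (l : List ℕ) : powerList (j+1) l = l ++ powerList j l := by
  simp [powerList, List.replicate_succ]

lemma EL_powerList (l : List ℕ) : ∀ j, EL f (powerList j l) = (EL f l) ^ j := by
  intro j
  induction j with
  | zero => simp [powerList, EL]
  | succ j ih => rw [powerList_succ, EL_append, ih, pow_succ']

variable (Ek : WithOne S)

/-- Normal form for words of the shape `x^k v₁ x^k v₂ x^k ⋯ x^k v_r x^k`. -/
def NFw (vs : List ℕ) : WithOne S := Ek * (vs.map (fun v => Fv f v * Ek)).prod

variable (hEk : Ek * Ek = Ek)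

include hEk in
lemma NF_tail_absorb : ∀ vs : List ℕ, vs ≠ [] →
    (vs.map (fun v => Fv f v * Ek)).prod * Ek = (vs.map (fun v => Fv f v * Ek)).prod := by
  intro vs
  induction vs with
  | nil => simp
  | cons v tl ih =>
    intro _
    cases tl with
    | nil => simp [mul_assoc, hEk]
    | cons w tl' =>
      rw [List.map_cons, List.prod_cons, mul_assoc, ih (by simp)]

include hEk in
lemma NF_append (vs₁ vs₂ : List ℕ) :
    NFw f Ek (vs₁ ++ vs₂) = NFw f Ek vs₁ * NFw f Ek vs₂ := by
  cases vs₁ with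
  | nil =>
    show NFw f Ek vs₂ = Ek * 1 * NFw f Ek vs₂
    rw [mul_one, NFw, ← mul_assoc, hEk]
  | cons v tl =>
    calc NFw f Ek ((v :: tl) ++ vs₂)
        = Ek * ((List.map (fun v => Fv f v * Ek) (v :: tl)).prod
            * (List.map (fun v => Fv f v * Ek) vs₂).prod) := by
          rw [NFw, List.map_append, List.prod_append]
    _ = Ek * (((List.map (fun v => Fv f v * Ek) (v :: tl)).prod * Ek)
            * (List.map (fun v => Fv f v * Ek) vs₂).prod) := by
          rw [NF_tail_absorb f Ek hEk (v :: tl) (by simp)]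
    _ = NFw f Ek (v :: tl) * NFw f Ek vs₂ := by
          rw [NFw, NFw]; simp [mul_assoc]

include hEk in
lemma NF_flatMap {ι : Type*} (h : ι → List ℕ) :
    ∀ L : List ι, L ≠ [] → NFw f Ek (L.flatMap h) = (L.map (fun i => NFw f Ek (h i))).prod := by
  intro L
  induction L with
  | nil => simp
  | cons i L ih =>
    intro _
    cases L with
    | nil => simp
    | cons i' L' =>
      rw [List.flatMap_cons, NF_append f Ek hEk, ih (by simp)]
      simp

include hEk in
lemma ILVW : ∀ vs : List ℕ, vs ≠ [] →
    (vs.map (fun v => Ek * Fv f v * Ek)).prod = NFw f Ek vs := by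
  intro vs
  induction vs with
  | nil => simp
  | cons v tl ih =>
    intro _
    cases tl with
    | nil => simp [NFw, mul_assoc]
    | cons w tl' =>
      rw [List.map_cons, List.prod_cons, ih (by simp), NFw, NFw, List.map_cons,
        List.prod_cons]
      have habs : ∀ z : WithOne S, Ek * (Ek * z) = Ek * z := by
        intro z
        rw [← mul_assoc, hEk]
      simp [mul_assoc, habs]

end Words

section BlockWords

variable {S : Type*} [Semigroup S] (f : ℕ → S) (Ek : WithOne S)

/-- The non-`x` variables of `aWord n k τ`, in order. -/
def varsA (n : ℕ) (τ : ℕ → ℕ) : List ℕ :=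
  varX (τ 0) :: (List.range n).flatMap (fun i => [varY (i+1), varX (τ (i+1))])

/-- The non-`x` variables of `bWord n k τ`, in order. -/
def varsB (n : ℕ) (τ : ℕ → ℕ) : List ℕ :=
  varZ (τ 0) :: (List.range n).flatMap (fun i => [varY (i+1), varZ (τ (i+1))])

variable (k : ℕ)

lemma PH' (hrep : EL f (List.replicate k varx) = Ek) (g₁ g₂ : ℕ → ℕ) :
    ∀ L : List ℕ,
    EL f (L.flatMap fun i =>
        List.replicate k varx ++ [g₁ i] ++ List.replicate k varx ++ [g₂ i])
      = ((L.flatMap fun i => [g₁ i, g₂ i]).map (fun v => Ek * Fv f v)).prod := by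
  intro L
  induction L with
  | nil => simp [EL]
  | cons i L ih =>
    rw [List.flatMap_cons, EL_append, ih, List.flatMap_cons]
    have hrep' : ((Fv f varx) ^ k : WithOne S) = Ek := by rw [← EL_replicate]; exact hrep
    simp [EL_append, EL_cons, EL_single, EL_nil, EL_replicate, hrep', mul_assoc]

lemma PHS : ∀ ws : List ℕ,
    (ws.map (fun v => Ek * Fv f v)).prod * Ek = Ek * (ws.map (fun v => Fv f v * Ek)).prod := by
  intro ws
  induction ws with
  | nil => simp
  | cons v ws ih =>
    rw [List.map_cons, List.prod_cons, List.map_cons, List.prod_cons, mul_assoc, ih]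
    simp [mul_assoc]

lemma WA (hrep : EL f (List.replicate k varx) = Ek) (n : ℕ) (τ : ℕ → ℕ) :
    EL f (aWord n k τ) = NFw f Ek (varsA n τ) := by
  have hph := PH' f Ek k hrep (fun i => varY (i+1)) (fun i => varX (τ (i+1))) (List.range n)
  have hphs := PHS f Ek ((List.range n).flatMap fun i => [varY (i+1), varX (τ (i+1))])
  rw [aWord, EL_append, EL_append, EL_append, hrep, EL_single, hph, varsA, NFw,
    List.map_cons, List.prod_cons, mul_assoc (Ek * Fv f (varX (τ 0))), hphs]
  simp [mul_assoc]

lemma WB (hrep : EL f (List.replicate k varx) = Ek) (n : ℕ) (τ : ℕ → ℕ) :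
    EL f (bWord n k τ) = NFw f Ek (varsB n τ) := by
  have hph := PH' f Ek k hrep (fun i => varY (i+1)) (fun i => varZ (τ (i+1))) (List.range n)
  have hphs := PHS f Ek ((List.range n).flatMap fun i => [varY (i+1), varZ (τ (i+1))])
  rw [bWord, EL_append, EL_append, EL_append, hrep, EL_single, hph, varsB, NFw,
    List.map_cons, List.prod_cons, mul_assoc (Ek * Fv f (varZ (τ 0))), hphs]
  simp [mul_assoc]

end BlockWords

section Generators

variable {S : Type*} [Semigroup S] (f : ℕ → S) (E : S)

/-- The generators `E f(v) E` of the local submonoid. -/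
def gMdef (v : ℕ) : ↥(localSub E) := ⟨E * f v * E, ⟨f v, rfl⟩⟩

/-- The generator list of the `t`-th block. -/
def lsdef (n t : ℕ) : List ↥(localSub E) :=
  (varsA n (fun j => (j + t) % (n+1)) ++ varsB n (fun j => (j + t) % (n+1))).map (gMdef f E)

/-- The full generator alphabet. -/
def Γdef (n : ℕ) : List ↥(localSub E) :=
  (((List.range (n+1)).flatMap (fun l => [varX l, varZ l]))
    ++ (List.range n).map (fun i => varY (i+1))).map (gMdef f E)

lemma lsdef_ne (n t : ℕ) : lsdef f E n t ≠ [] := by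
  simp [lsdef, varsA]

lemma memXA (n : ℕ) (σ : ℕ → ℕ) (j : ℕ) (hj : j < n + 1) : varX (σ j) ∈ varsA n σ := by
  match j with
  | 0 => exact List.mem_cons_self
  | (i+1) =>
    refine List.mem_cons_of_mem _ (List.mem_flatMap.mpr ⟨i, List.mem_range.mpr (by omega), ?_⟩)
    simp

lemma memYA (n : ℕ) (σ : ℕ → ℕ) (i : ℕ) (hi : i < n) : varY (i+1) ∈ varsA n σ := by
  refine List.mem_cons_of_mem _ (List.mem_flatMap.mpr ⟨i, List.mem_range.mpr hi, ?_⟩)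
  simp

lemma memZB (n : ℕ) (σ : ℕ → ℕ) (j : ℕ) (hj : j < n + 1) : varZ (σ j) ∈ varsB n σ := by
  match j with
  | 0 => exact List.mem_cons_self
  | (i+1) =>
    refine List.mem_cons_of_mem _ (List.mem_flatMap.mpr ⟨i, List.mem_range.mpr (by omega), ?_⟩)
    simp

lemma memYB (n : ℕ) (σ : ℕ → ℕ) (i : ℕ) (hi : i < n) : varY (i+1) ∈ varsB n σ := by
  refine List.mem_cons_of_mem _ (List.mem_flatMap.mpr ⟨i, List.mem_range.mpr hi, ?_⟩)
  simp

lemma lsdef_sub (n t : ℕ) : ∀ g ∈ lsdef f E n t, g ∈ Γdef f E n := by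
  intro g hg
  obtain ⟨v, hv, rfl⟩ := List.mem_map.mp hg
  refine List.mem_map.mpr ⟨v, ?_, rfl⟩
  rcases List.mem_append.mp hv with hva | hvb
  · rcases List.mem_cons.mp hva with rfl | hva'
    · exact List.mem_append_left _ (List.mem_flatMap.mpr
        ⟨(0 + t) % (n+1), List.mem_range.mpr (Nat.mod_lt _ (by omega)), by simp⟩)
    · obtain ⟨i, hi, hv2⟩ := List.mem_flatMap.mp hva'
      rcases List.mem_cons.mp hv2 with rfl | hv3
      · exact List.mem_append_right _ (List.mem_map.mpr ⟨i, hi, rfl⟩)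
      · rcases List.mem_cons.mp hv3 with rfl | h
        · exact List.mem_append_left _ (List.mem_flatMap.mpr
            ⟨(i + 1 + t) % (n+1), List.mem_range.mpr (Nat.mod_lt _ (by omega)), by simp⟩)
        · simp at h
  · rcases List.mem_cons.mp hvb with rfl | hvb'
    · exact List.mem_append_left _ (List.mem_flatMap.mpr
        ⟨(0 + t) % (n+1), List.mem_range.mpr (Nat.mod_lt _ (by omega)), by simp⟩)
    · obtain ⟨i, hi, hv2⟩ := List.mem_flatMap.mp hvb'
      rcases List.mem_cons.mp hv2 with rfl | hv3
      · exact List.mem_append_right _ (List.mem_map.mpr ⟨i, hi, rfl⟩)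
      · rcases List.mem_cons.mp hv3 with rfl | h
        · exact List.mem_append_left _ (List.mem_flatMap.mpr
            ⟨(i + 1 + t) % (n+1), List.mem_range.mpr (Nat.mod_lt _ (by omega)), by simp⟩)
        · simp at h

lemma harith (n t l : ℕ) (hl : l < n + 1) : ∃ j, j < n + 1 ∧ (j + t) % (n + 1) = l := by
  refine ⟨(l + (n+1) - t % (n+1)) % (n+1), Nat.mod_lt _ (by omega), ?_⟩
  have hr : t % (n+1) < n + 1 := Nat.mod_lt _ (by omega)
  calc ((l + (n+1) - t % (n+1)) % (n+1) + t) % (n+1)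
      = (l + (n+1) - t % (n+1) + t) % (n+1) := Nat.mod_add_mod _ _ _
  _ = (l + (n+1) - t % (n+1) + (t % (n+1) + (n+1) * (t / (n+1)))) % (n+1) := by
        rw [Nat.mod_add_div]
  _ = (l + (n+1) - t % (n+1) + t % (n+1) + (n+1) * (t / (n+1))) % (n+1) := by
        rw [← Nat.add_assoc]
  _ = (l + (n+1) - t % (n+1) + t % (n+1)) % (n+1) := by
        rw [Nat.add_mul_mod_self_left]
  _ = (l + (n+1)) % (n+1) := by congr 1; omega
  _ = l % (n+1) := Nat.add_mod_right _ _
  _ = l := Nat.mod_eq_of_lt hl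

lemma lsdef_sup (n t : ℕ) : ∀ g ∈ Γdef f E n, g ∈ lsdef f E n t := by
  intro g hg
  obtain ⟨v, hv, rfl⟩ := List.mem_map.mp hg
  refine List.mem_map.mpr ⟨v, ?_, rfl⟩
  rcases List.mem_append.mp hv with hvx | hvy
  · obtain ⟨l, hl, hv2⟩ := List.mem_flatMap.mp hvx
    have hl' : l < n + 1 := List.mem_range.mp hl
    obtain ⟨j, hj, hjl⟩ := harith n t l hl'
    rcases List.mem_cons.mp hv2 with rfl | hv3
    · refine List.mem_append_left _ ?_
      rw [← hjl]
      exact memXA n (fun j => (j + t) % (n+1)) j hj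
    · rcases List.mem_cons.mp hv3 with rfl | h
      · refine List.mem_append_right _ ?_
        rw [← hjl]
        exact memZB n (fun j => (j + t) % (n+1)) j hj
      · simp at h
  · obtain ⟨i, hi, rfl⟩ := List.mem_map.mp hvy
    exact List.mem_append_left _ (memYA n _ i (List.mem_range.mp hi))

end Generators

end LDSAux

/-- **Semigroups in `LDS` satisfy `u_n ≈ u_n^{m+1}`.** Let `S` be a finite semigroup in `LDS`,
let `k ≥ 1` be such that `s^k` is idempotent for every `s ∈ S`, and let `m ≥ 1` be such that
`g^m` is the identity element of `G` for every subgroup `G` of `S`. Then for every `n > |S|`,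
the semigroup `S` satisfies the identity `u_n ≈ u_n^{m+1}`. -/
theorem LDS_satisfies_uWord_identity (S : Type) [Semigroup S] [Finite S] (hS : MemLDS S)
    (k : ℕ) (hk : 1 ≤ k) (hkidem : ∀ s : S, spow s k * spow s k = spow s k)
    (m : ℕ) (hm : 1 ≤ m)
    (hexp : ∀ (G : Subsemigroup S) (e : S), IsSubgroupWithIdentity G e →
      ∀ g ∈ G, spow g m = e)
    (n : ℕ) (hn : Nat.card S < n) :
    Satisfies S (wOfList (uWord n k)) (wOfList (powerList (m + 1) (uWord n k))) := by
  intro f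
  -- the idempotent `E = f(x)^k` and the local submonoid `E S E`
  set E : S := spow (f varx) k with hE_def
  have hEidem : E * E = E := hkidem (f varx)
  have hEmem : E ∈ localSub E := ⟨E, by rw [hEidem, hEidem]⟩
  letI : Monoid ↥(localSub E) :=
    { (inferInstance : Semigroup ↥(localSub E)) with
      one := ⟨E, hEmem⟩
      one_mul := fun a => by
        obtain ⟨av, s, hs⟩ := a
        apply Subtype.ext
        show E * av = av
        rw [hs, ← mul_assoc, ← mul_assoc, hEidem]
      mul_one := fun a => by
        obtain ⟨av, s, hs⟩ := a
        apply Subtype.ext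
        show av * E = av
        rw [hs, mul_assoc, hEidem] }
  have hidemM : ∀ t : ↥(localSub E), t ^ k * t ^ k = t ^ k := by
    intro t
    apply Subtype.ext
    have hcoe : ((t ^ k : ↥(localSub E)) : S) = spow (↑t) k :=
      LDSAux.map_pow_spow Subtype.val (fun a b => rfl) t k hk
    calc ((t ^ k * t ^ k : ↥(localSub E)) : S) = ↑(t ^ k) * ↑(t ^ k) := rfl
    _ = spow (↑t) k * spow (↑t) k := by rw [hcoe]
    _ = spow (↑t) k := hkidem ↑t
    _ = ↑(t ^ k) := hcoe.symm
  have hcard : Nat.card ↥(localSub E) < n :=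
    lt_of_le_of_lt (Nat.card_le_card_of_injective Subtype.val Subtype.val_injective) hn
  -- the main combinatorial lemma applied to the blocks of `u_n`
  have hmain := LDSAux.main_lemma k hk hidemM (hS E hEidem) n hcard
    (fun t => (LDSAux.lsdef f E n t).prod) (LDSAux.lsdef f E n) (LDSAux.Γdef f E n)
    (fun t _ => rfl) (fun t _ => LDSAux.lsdef_ne f E n t)
    (fun t _ => LDSAux.lsdef_sub f E n t) (fun t _ => LDSAux.lsdef_sup f E n t)
  set sM : ↥(localSub E) :=
    ((List.range (n+1)).map (fun t => (LDSAux.lsdef f E n t).prod)).prod with hsM_def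
  set sv : S := (sM : S) with hsv_def
  have hks : spow sv k * sv = sv := by
    have hc := congrArg Subtype.val hmain
    have hcoe : ((sM ^ k : ↥(localSub E)) : S) = spow sv k :=
      LDSAux.map_pow_spow Subtype.val (fun a b => rfl) sM k hk
    calc spow sv k * sv = ((sM ^ k : ↥(localSub E)) : S) * ↑sM := by rw [hcoe]
    _ = ((sM ^ k * sM : ↥(localSub E)) : S) := rfl
    _ = sv := hc
  -- `sv` generates a cyclic subgroup with identity `sv^k`
  have hper : ∀ j, 1 ≤ j → spow sv (j + k) = spow sv j := by
    intro j hj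
    induction j with
    | zero => omega
    | succ j ih =>
      rcases Nat.eq_or_lt_of_le hj with h1' | h1'
      · rw [← h1', Nat.add_comm 1 k, LDSAux.spow_add sv k hk 1 le_rfl, LDSAux.spow_one]
        exact hks
      · have hj' : 1 ≤ j := by omega
        rw [show j + 1 + k = (j + k) + 1 by omega, LDSAux.spow_succ _ _ (by omega), ih hj',
          LDSAux.spow_succ _ j hj']
  have heid_l : ∀ j, 1 ≤ j → spow sv k * spow sv j = spow sv j := by
    intro j hj
    rw [← LDSAux.spow_add sv k hk j hj, Nat.add_comm k j]
    exact hper j hj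
  have heid_r : ∀ j, 1 ≤ j → spow sv j * spow sv k = spow sv j := by
    intro j hj
    rw [← LDSAux.spow_add sv j hj k hk]
    exact hper j hj
  have hek : ∀ j, 1 ≤ j → spow sv (k * j) = spow sv k := by
    intro j hj
    induction j with
    | zero => omega
    | succ j ih =>
      rcases Nat.eq_or_lt_of_le hj with h' | h'
      · rw [← h', Nat.mul_one]
      · have hj' : 1 ≤ j := by omega
        rw [Nat.mul_succ, LDSAux.spow_add sv (k * j) (Nat.mul_pos hk hj') k hk, ih hj',
          hkidem sv]
  set G : Subsemigroup S :=
    { carrier := {x | ∃ j, 1 ≤ j ∧ spow sv j = x}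
      mul_mem' := by
        rintro a b ⟨j, hj, rfl⟩ ⟨l, hl, rfl⟩
        exact ⟨j + l, by omega, LDSAux.spow_add sv j hj l hl⟩ } with hG_def
  have hGsub : IsSubgroupWithIdentity G (spow sv k) := by
    refine ⟨⟨k, hk, rfl⟩, ?_, ?_⟩
    · rintro g ⟨j, hj, rfl⟩
      exact ⟨heid_l j hj, heid_r j hj⟩
    · rintro g ⟨j, hj, rfl⟩
      refine ⟨spow sv (j * (k-1) + k), ⟨j * (k-1) + k, by omega, rfl⟩, ?_, ?_⟩
      · rw [← LDSAux.spow_add sv j hj _ (by omega)]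
        have harr : j + (j * (k-1) + k) = k * (j+1) := by
          obtain ⟨k', rfl⟩ : ∃ k', k = k' + 1 := ⟨k - 1, by omega⟩
          simp only [Nat.add_sub_cancel]
          ring
        rw [harr, hek (j+1) (by omega)]
      · rw [← LDSAux.spow_add sv _ (by omega) j hj]
        have harr : (j * (k-1) + k) + j = k * (j+1) := by
          obtain ⟨k', rfl⟩ : ∃ k', k = k' + 1 := ⟨k - 1, by omega⟩
          simp only [Nat.add_sub_cancel]
          ring
        rw [harr, hek (j+1) (by omega)]
  have hmexp : spow sv m = spow sv k := hexp G (spow sv k) hGsub sv ⟨1, le_rfl, LDSAux.spow_one sv⟩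
  have hfinal : spow sv (m+1) = sv := by
    rw [LDSAux.spow_succ sv m hm, hmexp]
    exact hks
  -- evaluation of the word `u_n` in `S¹`
  set Ek : WithOne S := ((E : S) : WithOne S) with hEk_def
  have hEkW : Ek = (LDSAux.Fv f varx) ^ k := LDSAux.coe_spow (f varx) k hk
  have hEkidem : Ek * Ek = Ek := by rw [← WithOne.coe_mul, hEidem]
  have hrep : LDSAux.EL f (List.replicate k varx) = Ek := by
    rw [LDSAux.EL_replicate, hEkW]
  have hcoeW : ∀ a b : ↥(localSub E),
      (((a * b : ↥(localSub E)) : S) : WithOne S)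
        = ((a : S) : WithOne S) * ((b : S) : WithOne S) := by
    intro a b
    rw [show ((a * b : ↥(localSub E)) : S) = (a : S) * (b : S) from rfl, WithOne.coe_mul]
  have hblk : ∀ t : ℕ, ((((LDSAux.lsdef f E n t).prod : ↥(localSub E)) : S) : WithOne S)
      = LDSAux.NFw f Ek (LDSAux.varsA n (fun j => (j + t) % (n+1))
          ++ LDSAux.varsB n (fun j => (j + t) % (n+1))) := by
    intro t
    have h1 := LDSAux.prod_map_mul_hom
      (fun x : ↥(localSub E) => ((x : S) : WithOne S)) hcoeW
      (LDSAux.lsdef f E n t) (LDSAux.lsdef_ne f E n t)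
    refine Eq.trans h1 ?_
    rw [LDSAux.lsdef, List.map_map]
    have h2 : ((fun x : ↥(localSub E) => ((x : S) : WithOne S)) ∘ (LDSAux.gMdef f E))
        = fun v => Ek * LDSAux.Fv f v * Ek := by
      funext v
      show ((E * f v * E : S) : WithOne S) = _
      rw [WithOne.coe_mul, WithOne.coe_mul]
      rfl
    rw [h2]
    exact LDSAux.ILVW f Ek hEkidem _ (by simp [LDSAux.varsA])
  have hELu : LDSAux.EL f (uWord n k) = ((sv : S) : WithOne S) := by
    have hcoes := LDSAux.prod_map_mul_hom
      (fun x : ↥(localSub E) => ((x : S) : WithOne S)) hcoeW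
      ((List.range (n+1)).map (fun t => (LDSAux.lsdef f E n t).prod)) (by simp)
    rw [uWord, LDSAux.EL_flatMap, hsv_def, hsM_def]
    refine Eq.trans ?_ hcoes.symm
    rw [List.map_map]
    apply congrArg List.prod
    apply List.map_congr_left
    intro t _
    rw [LDSAux.EL_append, LDSAux.WA f Ek k hrep n (fun j => (j + t) % (n+1)),
      LDSAux.WB f Ek k hrep n (fun j => (j + t) % (n+1)),
      ← LDSAux.NF_append f Ek hEkidem]
    exact (hblk t).symm
  -- conclusion
  have hu_ne : uWord n k ≠ [] := by
    intro h
    have hlen := congrArg List.length h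
    rw [uWord, List.range_succ_eq_map, List.flatMap_cons] at hlen
    simp [aWord, List.length_append] at hlen
  have hp_ne : powerList (m + 1) (uWord n k) ≠ [] := by
    rw [LDSAux.powerList_succ]
    intro h
    exact hu_ne (List.append_eq_nil_iff.mp h).1
  apply WithOne.coe_inj.mp
  rw [LDSAux.lift_coe' f (uWord n k) hu_ne,
    LDSAux.lift_coe' f (powerList (m + 1) (uWord n k)) hp_ne,
    LDSAux.EL_powerList, hELu, ← LDSAux.coe_spow (sv : S) (m+1) (by omega), hfinal]
end

section
/- For every positive integer m, the number of partial maps of the chain 1 < 2 < ⋯ < m to itself that are injective, order preserving and extensive equals the (m+1)-st Catalan number C_{m+1} (with C_0 = 1, C_1 = 1, C_2 = 2, …). In particular, for m = 4 this number equals C_5 = 42, so |IC_4| = 42. -/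
/-! ### The i-Catalan monoids -/

/-- Partial maps of the chain `Fin m` (order-isomorphic to `1 < 2 < ⋯ < m`) that are injective,
order preserving and extensive; `toFun i = some j` means the map is defined at `i` with value
`j`, and `toFun i = none` means `i` is not in the domain. -/
structure ICmon (m : ℕ) where
  toFun : Fin m → Option (Fin m)
  inj' : ∀ i j a, toFun i = some a → toFun j = some a → i = j
  mono' : ∀ i j a b, i ≤ j → toFun i = some a → toFun j = some b → a ≤ b
  extv' : ∀ i a, toFun i = some a → i ≤ a

namespace ICmon

@[ext] theorem ext {m : ℕ} {α β : ICmon m} (h : α.toFun = β.toFun) : α = β := by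
  cases α; cases β; cases h; rfl

/-- Composition of partial maps, written left-to-right (`α * β` is "first `α`, then `β`"),
with the identity map as the unit. -/
instance (m : ℕ) : Monoid (ICmon m) where
  mul α β :=
    { toFun := fun i => (α.toFun i).bind β.toFun
      inj' := by
        intro i j a hi hj
        rcases Option.bind_eq_some_iff.mp hi with ⟨b, hb, hba⟩
        rcases Option.bind_eq_some_iff.mp hj with ⟨c, hc, hca⟩
        obtain rfl : b = c := β.inj' _ _ _ hba hca
        exact α.inj' _ _ _ hb hc
      mono' := by
        intro i j a b hij hi hj
        rcases Option.bind_eq_some_iff.mp hi with ⟨p, hp, hpa⟩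
        rcases Option.bind_eq_some_iff.mp hj with ⟨q, hq, hqb⟩
        exact β.mono' _ _ _ _ (α.mono' _ _ _ _ hij hp hq) hpa hqb
      extv' := by
        intro i a hi
        rcases Option.bind_eq_some_iff.mp hi with ⟨p, hp, hpa⟩
        exact le_trans (α.extv' _ _ hp) (β.extv' _ _ hpa) }
  one :=
    { toFun := fun i => some i
      inj' := by intro i j a hi hj; rw [Option.some_inj] at hi hj; rw [hi, hj]
      mono' := by
        intro i j a b hij hi hj
        rw [Option.some_inj] at hi hj; subst hi; subst hj; exact hij
      extv' := by intro i a hi; rw [Option.some_inj] at hi; exact hi.le }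
  mul_assoc α β γ := by
    ext1; funext i
    show ((α.toFun i).bind β.toFun).bind γ.toFun
        = (α.toFun i).bind fun b => (β.toFun b).bind γ.toFun
    cases α.toFun i <;> rfl
  one_mul α := by ext1; funext i; rfl
  mul_one α := by
    ext1; funext i
    show (α.toFun i).bind some = α.toFun i
    cases α.toFun i <;> rfl

end ICmon

/-- The 42-element i-Catalan monoid of all injective, order preserving and extensive partial
maps of the 4-element chain. -/
abbrev IC4 := ICmon 4

open List DyckStep

/-- letter recording whether a position is in the image -/
def iLet (b : Bool) : DyckStep := if b then D else U
/-- letter recording whether a position is in the domain -/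
def dLet (b : Bool) : DyckStep := if b then U else D

@[simp] lemma iLet_eq_D (b : Bool) : (iLet b = D) = (b = true) := by cases b <;> simp [iLet]
@[simp] lemma dLet_eq_U (b : Bool) : (dLet b = U) = (b = true) := by cases b <;> simp [dLet]

/-- number of `true`s of `h` below `j` -/
def cnt (h : ℕ → Bool) (j : ℕ) : ℕ := ((Finset.range j).filter (fun i => h i = true)).card

lemma cnt_succ (h : ℕ → Bool) (j : ℕ) :
    cnt h (j + 1) = cnt h j + (if h j then 1 else 0) := by
  unfold cnt
  rw [Finset.range_add_one, Finset.filter_insert]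
  split
  · rw [Finset.card_insert_of_notMem (by simp)]
    try simp_all
  · simp_all

lemma cnt_le (h : ℕ → Bool) (j : ℕ) : cnt h j ≤ j := by
  unfold cnt
  exact (Finset.card_filter_le _ _).trans (by simp)

lemma cnt_eq_of_support (h : ℕ → Bool) (m : ℕ) (hs : ∀ i, m ≤ i → h i = false)
    {j : ℕ} (hj : m ≤ j) : cnt h j = cnt h m := by
  induction j with
  | zero => have : m = 0 := by omega
            subst this; rfl
  | succ k ih =>
    rcases Nat.lt_or_ge m (k+1) with hlt | hge
    · rw [cnt_succ, ih (by omega), hs k (by omega)]; simp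
    · have : m = k + 1 := by omega
      subst this; rfl

/-- the middle part of the word associated to indicator functions f (image), g (domain) -/
def W : ℕ → (ℕ → Bool) → (ℕ → Bool) → List DyckStep
  | 0, _, _ => []
  | (m+1), f, g => W m f g ++ [iLet (f m), dLet (g m)]

@[simp] lemma length_W (m : ℕ) (f g : ℕ → Bool) : (W m f g).length = 2 * m := by
  induction m with
  | zero => rfl
  | succ k ih => simp [W, ih]; omega

lemma countU_W (m : ℕ) (f g : ℕ → Bool) :
    (W m f g).count U + cnt f m = m + cnt g m := by
  induction m with
  | zero => rfl
  | succ k ih =>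
    rw [W, count_append, cnt_succ, cnt_succ]
    cases hf : f k <;> cases hg : g k <;>
      simp [iLet, dLet, count_cons] <;> omega

lemma countD_W (m : ℕ) (f g : ℕ → Bool) :
    (W m f g).count D + cnt g m = m + cnt f m := by
  induction m with
  | zero => rfl
  | succ k ih =>
    rw [W, count_append, cnt_succ, cnt_succ]
    cases hf : f k <;> cases hg : g k <;>
      simp [iLet, dLet, count_cons] <;> omega

lemma take_W (m : ℕ) (f g : ℕ → Bool) {j : ℕ} (hj : j ≤ m) :
    (W m f g).take (2 * j) = W j f g := by
  induction m with
  | zero => interval_cases j; rfl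
  | succ k ih =>
    rcases Nat.lt_or_ge j (k+1) with hlt | hge
    · rw [W, take_append_of_le_length (by simp; omega), ih (by omega)]
    · have : j = k + 1 := by omega
      subst this
      exact take_of_length_le (by simp)

lemma getElem_W_even (m : ℕ) (f g : ℕ → Bool) {j : ℕ} (hj : j < m)
    (h' : 2 * j < (W m f g).length) : (W m f g)[2 * j] = iLet (f j) := by
  induction m with
  | zero => omega
  | succ k ih =>
    rcases Nat.lt_or_ge j k with hlt | hge
    · simp only [W]
      rw [getElem_append_left (by simp; omega)]
      exact ih hlt _
    · have : j = k := by omega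
      subst this
      simp only [W]
      rw [getElem_append_right (by simp)]
      simp

lemma getElem_W_odd (m : ℕ) (f g : ℕ → Bool) {j : ℕ} (hj : j < m)
    (h' : 2 * j + 1 < (W m f g).length) : (W m f g)[2 * j + 1] = dLet (g j) := by
  induction m with
  | zero => omega
  | succ k ih =>
    rcases Nat.lt_or_ge j k with hlt | hge
    · simp only [W]
      rw [getElem_append_left (by simp; omega)]
      exact ih hlt _
    · have : j = k := by omega
      subst this
      simp only [W]
      rw [getElem_append_right (by simp)]
      have h2 : 2 * j + 1 - (W j f g).length = 1 := by simp
      simp [h2]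
/-- pairs of indicator functions: image indicator `f = fg.1`, domain indicator `g = fg.2` -/
def Pairs (m : ℕ) := { fg : (ℕ → Bool) × (ℕ → Bool) //
  (∀ i, m ≤ i → fg.1 i = false) ∧ (∀ i, m ≤ i → fg.2 i = false) ∧
  cnt fg.1 m = cnt fg.2 m ∧ ∀ j, cnt fg.1 j ≤ cnt fg.2 j }

def word (m : ℕ) (f g : ℕ → Bool) : List DyckStep := U :: (W m f g ++ [D])

@[simp] lemma length_word (m : ℕ) (f g : ℕ → Bool) : (word m f g).length = 2 * m + 2 := by
  simp [word]

lemma countD_W_le (m : ℕ) (f g : ℕ → Bool) (hp : cnt f m ≤ cnt g m) :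
    (W m f g).count D ≤ (W m f g).count U := by
  have h1 := countU_W m f g
  have h2 := countD_W m f g
  omega

lemma prefix_W (m : ℕ) (f g : ℕ → Bool) (hp : ∀ j, cnt f j ≤ cnt g j) (k : ℕ) :
    ((W m f g).take k).count D ≤ ((W m f g).take k).count U + 1 := by
  induction m with
  | zero => simp [W]
  | succ n ih =>
    rcases Nat.lt_or_ge k (2 * n + 1) with hk | hk
    · have : (W (n+1) f g).take k = (W n f g).take k := by
        simp only [W]
        rw [take_append_of_le_length (by simp <;> omega)]
      rw [this]; exact ih
    rcases Nat.lt_or_ge k (2 * n + 2) with hk2 | hk2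
    · have hk3 : k = 2 * n + 1 := by omega
      subst hk3
      have : (W (n+1) f g).take (2 * n + 1) = W n f g ++ [iLet (f n)] := by
        simp only [W]
        rw [show 2*n+1 = (W n f g).length + 1 by simp, take_append]
        simp
      rw [this]
      have := countD_W_le n f g (hp n)
      cases hfn : f n <;> simp [count_append, iLet, count_cons] <;> omega
    · have : (W (n+1) f g).take k = W (n+1) f g := take_of_length_le (by simp <;> omega)
      rw [this]
      have h1 := countU_W (n+1) f g
      have h2 := countD_W (n+1) f g
      have := hp (n+1)
      omega

/-- The Dyck word associated to a valid pair of indicator functions. -/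
def toDyck (m : ℕ) (f g : ℕ → Bool) (he : cnt f m = cnt g m)
    (hp : ∀ j, cnt f j ≤ cnt g j) : DyckWord where
  toList := word m f g
  count_U_eq_count_D := by
    have h1 := countU_W m f g
    have h2 := countD_W m f g
    simp [word, count_append, count_cons]
    omega
  count_D_le_count_U i := by
    match i with
    | 0 => simp
    | (k+1) =>
      simp only [word, take_succ_cons, count_cons]
      rcases Nat.lt_or_ge k (2 * m + 1) with hk | hk
      · rw [take_append_of_le_length (by simp <;> omega)]
        have := prefix_W m f g hp k
        simp
        omega
      · rw [take_of_length_le (by simp <;> omega)]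
        have := countD_W_le m f g (le_of_eq he)
        simp [count_append, count_cons]
        omega

lemma semilength_toDyck (m : ℕ) (f g : ℕ → Bool) (he : cnt f m = cnt g m)
    (hp : ∀ j, cnt f j ≤ cnt g j) : (toDyck m f g he hp).semilength = m + 1 := by
  have h1 := countU_W m f g
  simp [DyckWord.semilength, toDyck, word, count_append, count_cons]
  omega

lemma word_getElem_odd (m : ℕ) (f g : ℕ → Bool) {j : ℕ} (hj : j < m)
    (h' : 2 * j + 1 < (word m f g).length) : (word m f g)[2 * j + 1] = iLet (f j) := by
  simp only [word, getElem_cons_succ]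
  rw [getElem_append_left (by simp <;> omega)]
  exact getElem_W_even m f g hj _

lemma word_getElem_even (m : ℕ) (f g : ℕ → Bool) {j : ℕ} (hj : j < m)
    (h' : 2 * j + 2 < (word m f g).length) : (word m f g)[2 * j + 2] = dLet (g j) := by
  simp only [word, getElem_cons_succ]
  rw [getElem_append_left (by simp <;> omega)]
  exact getElem_W_odd m f g hj _

lemma word_getElem_last (m : ℕ) (f g : ℕ → Bool)
    (h' : 2 * m + 1 < (word m f g).length) : (word m f g)[2 * m + 1] = D := by
  simp only [word, getElem_cons_succ]
  rw [getElem_append_right (by simp)]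
  simp

/-- the image indicator recovered from a Dyck word -/
def fOf (p : DyckWord) : ℕ → Bool := fun j =>
  if h2 : 2 * j + 2 < p.toList.length then decide (p.toList[2 * j + 1]'(by omega) = D) else false

/-- the domain indicator recovered from a Dyck word -/
def gOf (p : DyckWord) : ℕ → Bool := fun j =>
  if h2 : 2 * j + 2 < p.toList.length then decide (p.toList[2 * j + 2]'h2 = U) else false

section decode
variable {m : ℕ}

lemma length_p (p : DyckWord) (hsl : p.semilength = m + 1) : p.toList.length = 2 * m + 2 := by
  rw [← p.two_mul_semilength_eq_length, hsl]; ring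

lemma fOf_support (p : DyckWord) (hsl : p.semilength = m + 1) :
    ∀ i, m ≤ i → fOf p i = false := by
  intro i hi
  rw [fOf, dif_neg]
  rw [length_p p hsl]; omega

lemma gOf_support (p : DyckWord) (hsl : p.semilength = m + 1) :
    ∀ i, m ≤ i → gOf p i = false := by
  intro i hi
  rw [gOf, dif_neg]
  rw [length_p p hsl]; omega

lemma word_eq (p : DyckWord) (hsl : p.semilength = m + 1) :
    p.toList = word m (fOf p) (gOf p) := by
  have hlen := length_p p hsl
  apply List.ext_getElem (by simp [hlen])
  intro n h1 h2
  match n, h1 with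
  | 0, _ =>
    rw [List.getElem_zero, p.head_eq_U]
    rfl
  | (n+1), h1 =>
    rcases Nat.lt_or_ge (n+1) (2*m+1) with hn | hn
    · rcases Nat.even_or_odd n with hpar | hpar
      · obtain ⟨j, rfl⟩ : ∃ j, n = 2 * j := ⟨n / 2, by rcases hpar with ⟨t, ht⟩; omega⟩
        have hjm : j < m := by omega
        rw [word_getElem_odd m _ _ hjm]
        have hf : fOf p j = decide (p.toList[2 * j + 1]'(by omega) = D) := by
          simp only [fOf]
          rw [dif_pos (show 2 * j + 2 < p.toList.length by omega)]
        rw [hf]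
        rcases (p.toList[2*j+1]'(by omega)).dichotomy with h | h <;> rw [h] <;> simp [iLet]
      · obtain ⟨j, rfl⟩ : ∃ j, n = 2 * j + 1 := ⟨n / 2, by rcases hpar with ⟨t, ht⟩; omega⟩
        have hjm : j < m := by omega
        have key : (p.toList)[2*j+2]'(by omega)
            = (word m (fOf p) (gOf p))[2*j+2]'(by simp <;> omega) := by
          rw [word_getElem_even m _ _ hjm]
          have hg : gOf p j = decide (p.toList[2 * j + 2]'(by omega) = U) := by
            simp only [gOf]
            rw [dif_pos (show 2 * j + 2 < p.toList.length by omega)]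
          rw [hg]
          rcases (p.toList[2*j+2]'(by omega)).dichotomy with h | h <;> rw [h] <;> simp [dLet]
        exact key
    · obtain rfl : n = 2 * m := by omega
      rw [word_getElem_last]
      have hD := p.getLast_eq_D (by intro hnil; rw [hnil] at hlen; simp at hlen)
      rw [List.getLast_eq_getElem] at hD
      convert hD using 2
      omega

lemma cnt_fOf_le (p : DyckWord) (hsl : p.semilength = m + 1) (j : ℕ) :
    cnt (fOf p) j ≤ cnt (gOf p) j := by
  have key : ∀ j ≤ m, cnt (fOf p) j ≤ cnt (gOf p) j := by
    intro j hj
    have hd := p.count_D_le_count_U (2 * j + 1)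
    rw [word_eq p hsl] at hd
    have htake : (word m (fOf p) (gOf p)).take (2*j+1) = U :: W j (fOf p) (gOf p) := by
      simp only [word, take_succ_cons]
      rw [take_append_of_le_length (by simp <;> omega), take_W m _ _ hj]
    rw [htake] at hd
    have h1 := countU_W j (fOf p) (gOf p)
    have h2 := countD_W j (fOf p) (gOf p)
    simp [count_cons] at hd
    omega
  rcases Nat.lt_or_ge m j with hj | hj
  · rw [cnt_eq_of_support _ m (fOf_support p hsl) (by omega),
      cnt_eq_of_support _ m (gOf_support p hsl) (by omega)]
    exact key m le_rfl
  · exact key j hj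

lemma cnt_fOf_eq (p : DyckWord) (hsl : p.semilength = m + 1) :
    cnt (fOf p) m = cnt (gOf p) m := by
  have hb := p.count_U_eq_count_D
  rw [word_eq p hsl] at hb
  have h1 := countU_W m (fOf p) (gOf p)
  have h2 := countD_W m (fOf p) (gOf p)
  simp [word, count_append, count_cons] at hb
  omega

end decode

/-- The equivalence between valid pairs and Dyck words of semilength `m+1`. -/
def pairsEquivDyck (m : ℕ) : Pairs m ≃ { p : DyckWord // p.semilength = m + 1 } where
  toFun x := ⟨toDyck m x.1.1 x.1.2 x.2.2.2.1 x.2.2.2.2,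
    semilength_toDyck m x.1.1 x.1.2 _ _⟩
  invFun y := ⟨(fOf y.1, gOf y.1),
    fOf_support y.1 y.2, gOf_support y.1 y.2, cnt_fOf_eq y.1 y.2, cnt_fOf_le y.1 y.2⟩
  left_inv := by
    rintro ⟨⟨f, g⟩, hf, hg, he, hp⟩
    have hw : (toDyck m f g he hp).toList = word m f g := rfl
    apply Subtype.ext
    apply Prod.ext
    · funext j
      show fOf (toDyck m f g he hp) j = f j
      rw [fOf]
      split
      · rename_i h2
        rw [hw, length_word] at h2
        have hjm : j < m := by omega
        simp only [show ((toDyck m f g he hp : DyckWord) : List DyckStep) = word m f g from rfl]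
        rw [word_getElem_odd m f g hjm]
        cases hfj : f j <;> simp [iLet]
      · rename_i h2
        rw [hw, length_word] at h2
        exact (hf j (by omega)).symm
    · funext j
      show gOf (toDyck m f g he hp) j = g j
      rw [gOf]
      split
      · rename_i h2
        rw [hw, length_word] at h2
        have hjm : j < m := by omega
        simp only [show ((toDyck m f g he hp : DyckWord) : List DyckStep) = word m f g from rfl]
        rw [word_getElem_even m f g hjm]
        cases hgj : g j <;> simp [dLet]
      · rename_i h2
        rw [hw, length_word] at h2
        exact (hg j (by omega)).symm
  right_inv := by
    rintro ⟨p, hsl⟩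
    apply Subtype.ext
    apply DyckWord.ext
    exact (word_eq p hsl).symm
section bridge
variable {m : ℕ}

open Finset in
lemma cnt_eq_card (h : ℕ → Bool) {j : ℕ} (hj : j ≤ m) :
    cnt h j = (univ.filter (fun i : Fin m => h i.val = true ∧ i.val < j)).card := by
  unfold cnt
  apply Finset.card_bij (fun a ha => (⟨a, by
    simp only [Finset.mem_filter, Finset.mem_range] at ha; omega⟩ : Fin m))
  · intro a ha
    simp only [Finset.mem_filter, Finset.mem_range] at ha ⊢
    exact ⟨Finset.mem_univ _, ha.2, ha.1⟩
  · intro a ha b hb hab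
    simpa using congrArg Fin.val hab
  · intro b hb
    simp only [Finset.mem_filter, Finset.mem_range] at hb ⊢
    exact ⟨b.val, ⟨hb.2.2, hb.2.1⟩, rfl⟩

open Finset in
/-- the key order lemma: if every initial segment contains at least as many elements of `A`
as of `B`, then the `k`-th smallest element of `A` is at most that of `B`. -/
lemma orderEmb_le (A B : Finset (Fin m)) (hc : B.card = A.card)
    (hp : ∀ x : Fin m, (B.filter (· ≤ x)).card ≤ (A.filter (· ≤ x)).card)
    (k : Fin A.card) :
    A.orderEmbOfFin rfl k ≤ B.orderEmbOfFin hc k := by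
  by_contra hab
  push_neg at hab
  set b := B.orderEmbOfFin hc k with hbdef
  -- claim 1 : (A.filter (· ≤ b)).card ≤ k
  have claim1 : (A.filter (· ≤ b)).card ≤ (k : ℕ) := by
    have := Finset.card_le_card_of_injOn
      (f := fun x => if h : x ∈ A then ((A.orderIsoOfFin rfl).symm ⟨x, h⟩ : Fin A.card).val else 0)
      (s := A.filter (· ≤ b)) (t := Finset.range k) ?_ ?_
    · simpa using this
    · intro x hx
      simp only [Finset.mem_coe, Finset.mem_filter] at hx
      simp only [dif_pos hx.1, Finset.mem_coe, Finset.mem_range]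
      by_contra hk
      push_neg at hk
      have hkk : k ≤ ((A.orderIsoOfFin rfl).symm ⟨x, hx.1⟩ : Fin A.card) := by
        exact_mod_cast hk
      have hmono := (A.orderEmbOfFin rfl).monotone hkk
      have hx2 : A.orderEmbOfFin rfl ((A.orderIsoOfFin rfl).symm ⟨x, hx.1⟩) = x := by
        rw [← Finset.coe_orderIsoOfFin_apply, OrderIso.apply_symm_apply]
      rw [hx2] at hmono
      exact absurd (le_trans hmono hx.2) (not_le.mpr hab)
    · intro x hx y hy hxy
      simp only [Finset.mem_coe, Finset.mem_filter] at hx hy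
      simp only [dif_pos hx.1, dif_pos hy.1] at hxy
      have h1 : (A.orderIsoOfFin rfl).symm ⟨x, hx.1⟩ = (A.orderIsoOfFin rfl).symm ⟨y, hy.1⟩ :=
        Fin.ext (by exact_mod_cast hxy)
      exact congrArg Subtype.val ((A.orderIsoOfFin rfl).symm.injective h1)
  -- claim 2 : k + 1 ≤ (B.filter (· ≤ b)).card
  have claim2 : (k : ℕ) + 1 ≤ (B.filter (· ≤ b)).card := by
    have hkB : (k : ℕ) < A.card := k.isLt
    have := Finset.card_le_card_of_injOn
      (f := fun j : ℕ => if h : j < A.card then B.orderEmbOfFin hc ⟨j, h⟩ else b)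
      (s := Finset.range ((k : ℕ) + 1)) (t := B.filter (· ≤ b)) ?_ ?_
    · simpa using this
    · intro j hj
      simp only [Finset.mem_coe, Finset.mem_range] at hj
      have hjB : j < A.card := by omega
      simp only [dif_pos hjB, Finset.mem_coe, Finset.mem_filter]
      refine ⟨Finset.orderEmbOfFin_mem _ _ _, ?_⟩
      rw [hbdef]
      exact (B.orderEmbOfFin hc).monotone (by simp only [Fin.le_def]; omega)
    · intro x hx y hy hxy
      simp only [Finset.mem_coe, Finset.mem_range] at hx hy
      simp only [dif_pos (show x < A.card by omega), dif_pos (show y < A.card by omega)] at hxy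
      have := (B.orderEmbOfFin hc).injective hxy
      simpa [Fin.ext_iff] using this
  have := hp b
  omega

end bridge
section ICtoPairs
open Finset
variable {m : ℕ}

/-- domain indicator function of a partial map -/
def gD (α : ICmon m) : ℕ → Bool := fun n =>
  if h : n < m then (α.toFun ⟨n, h⟩).isSome else false
/-- image indicator function of a partial map -/
def fI (α : ICmon m) : ℕ → Bool := fun n =>
  if h : n < m then decide (∃ i, α.toFun i = some ⟨n, h⟩) else false

lemma gD_support (α : ICmon m) : ∀ i, m ≤ i → gD α i = false := fun i hi => by
  rw [gD, dif_neg (by omega)]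

lemma fI_support (α : ICmon m) : ∀ i, m ≤ i → fI α i = false := fun i hi => by
  rw [fI, dif_neg (by omega)]

lemma cnt_gD (α : ICmon m) {j : ℕ} (hj : j ≤ m) :
    cnt (gD α) j = (univ.filter (fun i : Fin m => (α.toFun i).isSome ∧ i.val < j)).card := by
  rw [cnt_eq_card (m := m) _ hj]
  congr 1
  apply Finset.filter_congr
  intro i _
  simp [gD, i.isLt]

lemma cnt_fI (α : ICmon m) {j : ℕ} (hj : j ≤ m) :
    cnt (fI α) j
      = (univ.filter (fun b : Fin m => (∃ i, α.toFun i = some b) ∧ b.val < j)).card := by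
  rw [cnt_eq_card (m := m) _ hj]
  congr 1
  apply Finset.filter_congr
  intro b _
  simp [fI, b.isLt]

lemma cnt_fI_le_gD (α : ICmon m) (j : ℕ) : cnt (fI α) j ≤ cnt (gD α) j := by
  have key : ∀ j ≤ m, cnt (fI α) j ≤ cnt (gD α) j := by
    intro j hj
    rw [cnt_fI α hj, cnt_gD α hj]
    classical
    apply Finset.card_le_card_of_injOn
      (f := fun b => if h : ∃ i, α.toFun i = some b then h.choose else b)
    · intro b hb
      simp only [Finset.mem_coe, Finset.mem_filter, Finset.mem_univ, true_and] at hb ⊢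
      rw [dif_pos hb.1]
      have hs := hb.1.choose_spec
      constructor
      · rw [hs]; rfl
      · have := α.extv' _ _ hs
        have hlt : (hb.1.choose : Fin m) ≤ b := this
        omega
    · intro x hx y hy hxy
      simp only [Finset.mem_coe, Finset.mem_filter, Finset.mem_univ, true_and] at hx hy
      simp only [dif_pos hx.1, dif_pos hy.1] at hxy
      have hx2 := hx.1.choose_spec
      have hy2 := hy.1.choose_spec
      rw [hxy, hy2] at hx2
      exact (Option.some_inj.mp hx2).symm
  rcases Nat.lt_or_ge m j with hj | hj
  · rw [cnt_eq_of_support _ m (fI_support α) (by omega),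
      cnt_eq_of_support _ m (gD_support α) (by omega)]
    exact key m le_rfl
  · exact key j hj

lemma cnt_fI_eq_gD (α : ICmon m) : cnt (fI α) m = cnt (gD α) m := by
  rw [cnt_fI α le_rfl, cnt_gD α le_rfl]
  classical
  apply Finset.card_bij (i := fun b hb => (Exists.choose (by
    simpa using (Finset.mem_filter.mp hb).2.1 : ∃ i, α.toFun i = some b)))
  · intro b hb
    simp only [Finset.mem_filter, Finset.mem_univ, true_and] at hb ⊢
    have hs := (show ∃ i, α.toFun i = some b by simpa using hb.1).choose_spec
    exact ⟨by rw [hs]; rfl, Fin.isLt _⟩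
  · intro x hx y hy hxy
    simp only [Finset.mem_filter, Finset.mem_univ, true_and] at hx hy
    have hx2 := (show ∃ i, α.toFun i = some x by simpa using hx.1).choose_spec
    have hy2 := (show ∃ i, α.toFun i = some y by simpa using hy.1).choose_spec
    rw [hxy, hy2] at hx2
    exact (Option.some_inj.mp hx2).symm
  · intro i hi
    simp only [Finset.mem_filter, Finset.mem_univ, true_and] at hi
    obtain ⟨a, ha⟩ := Option.isSome_iff_exists.mp hi.1
    refine ⟨a, Finset.mem_filter.mpr ⟨Finset.mem_univ _, ⟨i, ha⟩, a.isLt⟩, ?_⟩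
    have hs := (show ∃ i', α.toFun i' = some a from ⟨i, ha⟩).choose_spec
    exact α.inj' _ _ _ hs ha

end ICtoPairs
section mkIC
open Finset
variable {m : ℕ}

/-- set of positions where an indicator is true -/
def DsetOf (h : ℕ → Bool) : Finset (Fin m) := Finset.univ.filter (fun i => h i.val = true)

lemma cnt_eq_card_full (h : ℕ → Bool) : cnt h m = (DsetOf (m := m) h).card := by
  rw [cnt_eq_card (m := m) _ le_rfl]
  congr 1
  apply Finset.filter_congr
  intro i _
  simp [i.isLt]

lemma card_DsetOf_eq (f g : ℕ → Bool) (he : cnt f m = cnt g m) :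
    (DsetOf (m := m) f).card = (DsetOf (m := m) g).card := by
  rw [← cnt_eq_card_full, ← cnt_eq_card_full, he]

lemma filter_le_DsetOf (f g : ℕ → Bool) (hp : ∀ j, cnt f j ≤ cnt g j) (x : Fin m) :
    ((DsetOf (m := m) f).filter (· ≤ x)).card ≤ ((DsetOf (m := m) g).filter (· ≤ x)).card := by
  have h1 := hp (x.val + 1)
  rw [cnt_eq_card (m := m) _ (by omega), cnt_eq_card (m := m) _ (by omega)] at h1
  have e : ∀ h : ℕ → Bool, (DsetOf (m := m) h).filter (· ≤ x)
      = Finset.univ.filter (fun i : Fin m => h i.val = true ∧ i.val < x.val + 1) := by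
    intro h
    rw [DsetOf, Finset.filter_filter]
    apply Finset.filter_congr
    intro i _
    simp only [Fin.le_def]
    constructor <;> rintro ⟨ha, hb⟩ <;> exact ⟨ha, by omega⟩
  rw [e f, e g]
  exact h1

/-- the partial map associated to a pair of indicator functions -/
def mkFun (f g : ℕ → Bool)
    (hc : (DsetOf (m := m) f).card = (DsetOf (m := m) g).card) :
    Fin m → Option (Fin m) := fun i =>
  if h : i ∈ DsetOf (m := m) g then
    some ((DsetOf f).orderEmbOfFin hc (((DsetOf g).orderIsoOfFin rfl).symm ⟨i, h⟩))
  else none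

lemma mkFun_eq_some {f g : ℕ → Bool}
    {hc : (DsetOf (m := m) f).card = (DsetOf (m := m) g).card} {i a : Fin m} :
    mkFun f g hc i = some a ↔ ∃ h : i ∈ DsetOf (m := m) g,
      (DsetOf f).orderEmbOfFin hc (((DsetOf g).orderIsoOfFin rfl).symm ⟨i, h⟩) = a := by
  unfold mkFun
  split
  · rename_i h
    simp only [Option.some_inj]
    exact ⟨fun hh => ⟨h, hh⟩, fun ⟨_, hh⟩ => hh⟩
  · rename_i h
    simp only [reduceCtorEq, false_iff]
    rintro ⟨hh, -⟩
    exact h hh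

/-- the element of `ICmon m` associated to a valid pair of indicator functions -/
def mkIC (f g : ℕ → Bool) (he : cnt f m = cnt g m) (hp : ∀ j, cnt f j ≤ cnt g j) :
    ICmon m where
  toFun := mkFun f g (card_DsetOf_eq f g he)
  inj' := by
    intro i j a hi hj
    obtain ⟨h1, e1⟩ := mkFun_eq_some.mp hi
    obtain ⟨h2, e2⟩ := mkFun_eq_some.mp hj
    rw [← e2] at e1
    have := ((DsetOf g).orderIsoOfFin rfl).symm.injective
      (((DsetOf f).orderEmbOfFin _).injective e1)
    exact congrArg Subtype.val this
  mono' := by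
    intro i j a b hij hi hj
    obtain ⟨h1, e1⟩ := mkFun_eq_some.mp hi
    obtain ⟨h2, e2⟩ := mkFun_eq_some.mp hj
    rw [← e1, ← e2]
    apply ((DsetOf f).orderEmbOfFin _).monotone
    have : (⟨i, h1⟩ : {x // x ∈ DsetOf (m := m) g}) ≤ ⟨j, h2⟩ := hij
    exact ((DsetOf g).orderIsoOfFin rfl).symm.monotone this
  extv' := by
    intro i a hi
    obtain ⟨h1, e1⟩ := mkFun_eq_some.mp hi
    rw [← e1]
    have hi2 : (DsetOf g).orderEmbOfFin rfl (((DsetOf g).orderIsoOfFin rfl).symm ⟨i, h1⟩) = i := by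
      rw [← Finset.coe_orderIsoOfFin_apply, OrderIso.apply_symm_apply]
    calc i = (DsetOf g).orderEmbOfFin rfl (((DsetOf g).orderIsoOfFin rfl).symm ⟨i, h1⟩) := hi2.symm
    _ ≤ (DsetOf f).orderEmbOfFin _ (((DsetOf g).orderIsoOfFin rfl).symm ⟨i, h1⟩) :=
      orderEmb_le (DsetOf g) (DsetOf f) (card_DsetOf_eq f g he)
        (filter_le_DsetOf f g hp) _

end mkIC
section roundtrip
open Finset
variable {m : ℕ}

lemma DsetOf_gD (α : ICmon m) :
    DsetOf (m := m) (gD α) = Finset.univ.filter (fun i => (α.toFun i).isSome) := by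
  ext i
  simp [DsetOf, gD, i.isLt]

lemma DsetOf_fI (α : ICmon m) :
    DsetOf (m := m) (fI α) = Finset.univ.filter (fun b => ∃ i, α.toFun i = some b) := by
  ext b
  simp [DsetOf, fI, b.isLt]

lemma mem_DsetOf_gD {α : ICmon m} {i : Fin m} :
    i ∈ DsetOf (m := m) (gD α) ↔ (α.toFun i).isSome := by
  rw [DsetOf_gD]; simp

lemma mem_DsetOf_fI {α : ICmon m} {b : Fin m} :
    b ∈ DsetOf (m := m) (fI α) ↔ ∃ i, α.toFun i = some b := by
  rw [DsetOf_fI]; simp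

lemma mkIC_fI_gD (α : ICmon m) :
    mkIC (fI α) (gD α) (cnt_fI_eq_gD α) (cnt_fI_le_gD α) = α := by
  apply ICmon.ext
  funext i
  have hc := card_DsetOf_eq (m := m) (fI α) (gD α) (cnt_fI_eq_gD α)
  have hmemSome : ∀ k : Fin (DsetOf (m := m) (gD α)).card,
      (α.toFun ((DsetOf (gD α)).orderEmbOfFin rfl k)).isSome := by
    intro k
    exact mem_DsetOf_gD.mp (Finset.orderEmbOfFin_mem (DsetOf (gD α)) rfl k)
  set F : Fin (DsetOf (m := m) (gD α)).card → Fin m :=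
    fun k => (α.toFun ((DsetOf (gD α)).orderEmbOfFin rfl k)).get (hmemSome k) with hF
  have hsome : ∀ k, α.toFun ((DsetOf (gD α)).orderEmbOfFin rfl k) = some (F k) :=
    fun k => (Option.some_get _).symm
  have hFmem : ∀ k, F k ∈ DsetOf (m := m) (fI α) := by
    intro k
    exact mem_DsetOf_fI.mpr ⟨_, hsome k⟩
  have hFmono : StrictMono F := by
    intro k l hkl
    have hlt := ((DsetOf (gD α)).orderEmbOfFin rfl).strictMono hkl
    have hle : F k ≤ F l := α.mono' _ _ _ _ hlt.le (hsome k) (hsome l)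
    refine lt_of_le_of_ne hle (fun he => ?_)
    have := α.inj' _ _ _ (hsome k) (he ▸ hsome l)
    exact absurd (((DsetOf (gD α)).orderEmbOfFin rfl).injective this) hkl.ne
  have hFeq : F = ⇑((DsetOf (m := m) (fI α)).orderEmbOfFin hc) :=
    Finset.orderEmbOfFin_unique hc hFmem hFmono
  show mkFun (fI α) (gD α) hc i = α.toFun i
  by_cases h : i ∈ DsetOf (m := m) (gD α)
  · rw [mkFun, dif_pos h, ← hFeq]
    have hik : (DsetOf (gD α)).orderEmbOfFin rfl
        (((DsetOf (gD α)).orderIsoOfFin rfl).symm ⟨i, h⟩) = i := by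
      rw [← Finset.coe_orderIsoOfFin_apply, OrderIso.apply_symm_apply]
    conv_rhs => rw [← hik]
    exact (hsome _).symm
  · rw [mkFun, dif_neg h]
    rw [mem_DsetOf_gD] at h
    exact (Option.not_isSome_iff_eq_none.mp h).symm

lemma gD_mkIC (f g : ℕ → Bool) (hgs : ∀ i, m ≤ i → g i = false)
    (he : cnt f m = cnt g m) (hp : ∀ j, cnt f j ≤ cnt g j) :
    gD (mkIC f g he hp) = g := by
  funext n
  by_cases hn : n < m
  · rw [gD, dif_pos hn]
    show (mkFun f g (card_DsetOf_eq f g he) ⟨n, hn⟩).isSome = g n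
    by_cases hmem : (⟨n, hn⟩ : Fin m) ∈ DsetOf (m := m) g
    · rw [mkFun, dif_pos hmem]
      have : g n = true := by simpa [DsetOf] using hmem
      rw [this]; rfl
    · rw [mkFun, dif_neg hmem]
      have : ¬ g n = true := by simpa [DsetOf] using hmem
      simp at this
      rw [this]; rfl
  · rw [gD, dif_neg hn, hgs n (by omega)]

lemma fI_mkIC (f g : ℕ → Bool) (hfs : ∀ i, m ≤ i → f i = false)
    (he : cnt f m = cnt g m) (hp : ∀ j, cnt f j ≤ cnt g j) :
    fI (mkIC f g he hp) = f := by
  funext n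
  by_cases hn : n < m
  · rw [fI, dif_pos hn]
    have hc := card_DsetOf_eq (m := m) f g he
    show decide (∃ i, mkFun f g hc i = some ⟨n, hn⟩) = f n
    cases hfn : f n
    · apply decide_eq_false
      rintro ⟨i, hi⟩
      obtain ⟨h1, e1⟩ := mkFun_eq_some.mp hi
      have hmem := Finset.orderEmbOfFin_mem (DsetOf (m := m) f) hc
        (((DsetOf g).orderIsoOfFin rfl).symm ⟨i, h1⟩)
      rw [e1] at hmem
      have : f n = true := by simpa [DsetOf] using hmem
      rw [hfn] at this
      exact Bool.false_ne_true this
    · apply decide_eq_true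
      have hb : (⟨n, hn⟩ : Fin m) ∈ DsetOf (m := m) f := by
        simp [DsetOf, hfn]
      have : (⟨n, hn⟩ : Fin m) ∈ Set.range ((DsetOf (m := m) f).orderEmbOfFin hc) := by
        rw [Finset.range_orderEmbOfFin]
        exact_mod_cast hb
      obtain ⟨k, hk⟩ := this
      refine ⟨(DsetOf g).orderEmbOfFin rfl k, mkFun_eq_some.mpr
        ⟨Finset.orderEmbOfFin_mem _ _ _, ?_⟩⟩
      have hsymm : ((DsetOf (m := m) g).orderIsoOfFin rfl).symm
          ⟨(DsetOf g).orderEmbOfFin rfl k, Finset.orderEmbOfFin_mem _ _ _⟩ = k := by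
        rw [OrderIso.symm_apply_eq]
        apply Subtype.ext
        rw [Finset.coe_orderIsoOfFin_apply]
      rw [hsymm, hk]
  · rw [fI, dif_neg hn, hfs n (by omega)]

/-- the equivalence between `ICmon m` and pairs of indicator functions -/
def icmonEquivPairs (m : ℕ) : ICmon m ≃ Pairs m where
  toFun α := ⟨(fI α, gD α), fI_support α, gD_support α, cnt_fI_eq_gD α, cnt_fI_le_gD α⟩
  invFun x := mkIC x.1.1 x.1.2 x.2.2.2.1 x.2.2.2.2
  left_inv α := mkIC_fI_gD α
  right_inv x := by
    obtain ⟨⟨f, g⟩, hfs, hgs, he, hp⟩ := x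
    apply Subtype.ext
    show (fI (mkIC f g he hp), gD (mkIC f g he hp)) = (f, g)
    rw [fI_mkIC f g hfs he hp, gD_mkIC f g hgs he hp]

end roundtrip

theorem card_ICmon' (m : ℕ) : Nat.card (ICmon m) = catalan (m + 1) := by
  calc Nat.card (ICmon m)
      = Nat.card { p : DyckWord // p.semilength = m + 1 } :=
        Nat.card_congr ((icmonEquivPairs m).trans (pairsEquivDyck m))
    _ = catalan (m + 1) := by
        rw [Nat.card_eq_fintype_card, DyckWord.card_dyckWord_semilength_eq_catalan]

/-- **Counting `IC_m`.** For every positive integer `m`, the number of partial maps of the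
`m`-element chain to itself that are injective, order preserving and extensive equals the
`(m+1)`-st Catalan number; in particular `|IC₄| = C₅ = 42`. -/
theorem card_ICmon :
    (∀ m : ℕ, 0 < m → Nat.card (ICmon m) = catalan (m + 1)) ∧
    Nat.card IC4 = catalan 5 ∧ catalan 5 = 42 := by
  refine ⟨fun m _ => card_ICmon' m, card_ICmon' 4, ?_⟩
  simp [catalan_succ', Finset.Nat.sum_antidiagonal_eq_sum_range_succ_mk, Finset.sum_range_succ]
end
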